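/- arXiv:2109.09629 — 6 statements merged into one kernel-verified Lean document; each statement's English description precedes it below -/
import Mathlib

section
/- Let n ≥ 1, d = 2^n, and let Γ = Σ_k (ψ_k ψ_k†)^T ⊗ (ψ_k ψ_k†) be built from tensor products ψ_k = ψ_{1,k_1} ⊗ ⋯ ⊗ ψ_{n,k_n} of single-qubit SIC-POVM states. Then Γ is a Hermitian positive semidefinite d²×d² matrix whose largest eigenvalue is d with multiplicity 1, whose second largest eigenvalue is d/3 with multiplicity 3n, and all of whose remaining eigenvalues are strictly less than d/3. -/
open Matrix Polynomial
open scoped Kronecker ComplexOrder Classical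

noncomputable section

/-- Hermitian inner product on `m → ℂ`, conjugate-linear in the first argument. -/
def cinner {m : Type*} [Fintype m] (v w : m → ℂ) : ℂ :=
  ∑ a, (starRingEnd ℂ) (v a) * w a

/-- A single-qubit SIC-POVM: four unit vectors in ℂ² with pairwise squared overlaps 1/3. -/
def IsSICPOVM (ψ : Fin 4 → Fin 2 → ℂ) : Prop :=
  (∀ k, cinner (ψ k) (ψ k) = 1) ∧
  ∀ k k', k ≠ k' → ‖cinner (ψ k) (ψ k')‖ ^ 2 = 1 / 3

/-- Tensor product state `ψ_k = ψ_{1,k_1} ⊗ ⋯ ⊗ ψ_{n,k_n}` on `ℂ^(2^n)`,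
    whose coordinates are indexed by `Fin n → Fin 2`. -/
def prodState {n : ℕ} (ψ : Fin n → Fin 4 → Fin 2 → ℂ) (k : Fin n → Fin 4) :
    (Fin n → Fin 2) → ℂ :=
  fun x => ∏ i, ψ i (k i) (x i)

/-- The rank-one projector `ψψ†` onto a vector. -/
def proj {m : Type*} (v : m → ℂ) : Matrix m m ℂ :=
  Matrix.vecMulVec v (star v)

/-- The matrix `Γ = Σ_k (ψ_k ψ_k†)ᵀ ⊗ (ψ_k ψ_k†)`. -/
def Gam {n : ℕ} (ψ : Fin n → Fin 4 → Fin 2 → ℂ) :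
    Matrix ((Fin n → Fin 2) × (Fin n → Fin 2)) ((Fin n → Fin 2) × (Fin n → Fin 2)) ℂ :=
  ∑ k : Fin n → Fin 4, (proj (prodState ψ k))ᵀ ⊗ₖ proj (prodState ψ k)

/-- The maximally entangled vector `φ = (1/√d) Σ_x e_x ⊗ e_x`, `d = 2^n`. -/
def maxEnt (n : ℕ) : (Fin n → Fin 2) × (Fin n → Fin 2) → ℂ :=
  fun p => if p.1 = p.2 then (((Real.sqrt (2 ^ n))⁻¹ : ℝ) : ℂ) else 0


def Mq (a b c d : Fin 2) : ℂ :=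
  (2/3) * ((if a = c then 1 else 0) * (if b = d then 1 else 0)
    + (if a = b then 1 else 0) * (if c = d then 1 else 0))

set_option maxHeartbeats 2000000 in
lemma sic_sum (ψ : Fin 4 → Fin 2 → ℂ) (hψ : IsSICPOVM ψ) (a b c d : Fin 2) :
    ∑ k : Fin 4, ψ k c * (starRingEnd ℂ) (ψ k a) * ψ k b * (starRingEnd ℂ) (ψ k d)
      = Mq a b c d := by
  have hd : ∀ k, cinner (ψ k) (ψ k) = 1 := hψ.1
  have hf : ∀ k k', k ≠ k' → cinner (ψ k) (ψ k') * cinner (ψ k') (ψ k) = 1/3 := by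
    intro k k' h
    have h2 := hψ.2 k k' h
    have : cinner (ψ k') (ψ k) = (starRingEnd ℂ) (cinner (ψ k) (ψ k')) := by
      simp [cinner, map_sum, _root_.map_mul, mul_comm]
    rw [this, Complex.mul_conj, ← Complex.sq_norm, h2]
    norm_num
  have hg : ∀ k k', k ≠ k' →
      (cinner (ψ k) (ψ k') * cinner (ψ k') (ψ k))^2 = 1/9 := by
    intro k k' h; rw [hf k k' h]; norm_num
  set T : Fin 2 → Fin 2 → Fin 2 → Fin 2 → ℂ := fun a b c d =>
    (∑ k : Fin 4, ψ k c * (starRingEnd ℂ) (ψ k a) * ψ k b * (starRingEnd ℂ) (ψ k d))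
      - Mq a b c d with hT
  have expand : ∑ p : Fin 2 × Fin 2 × Fin 2 × Fin 2,
      T p.1 p.2.1 p.2.2.1 p.2.2.2 * (starRingEnd ℂ) (T p.1 p.2.1 p.2.2.1 p.2.2.2)
      = (∑ k : Fin 4, ∑ k' : Fin 4,
          (cinner (ψ k') (ψ k) * cinner (ψ k) (ψ k'))^2)
        - (8/3) * ∑ k : Fin 4, (cinner (ψ k) (ψ k))^2 + 16/3 := by
    simp only [hT, Mq, cinner, Fintype.sum_prod_type, Fin.sum_univ_two, Fin.sum_univ_four,
      map_sum, _root_.map_mul, map_sub, map_add, map_div₀, map_ofNat, _root_.map_one,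
      _root_.map_zero, apply_ite (starRingEnd ℂ), Complex.conj_conj]
    norm_num
    ring
  have hzero : ∑ p : Fin 2 × Fin 2 × Fin 2 × Fin 2,
      T p.1 p.2.1 p.2.2.1 p.2.2.2 * (starRingEnd ℂ) (T p.1 p.2.1 p.2.2.1 p.2.2.2) = 0 := by
    rw [expand]
    rw [Fin.sum_univ_four]
    simp only [Fin.sum_univ_four, hd,
      hg 1 0 (by decide), hg 2 0 (by decide), hg 3 0 (by decide),
      hg 0 1 (by decide), hg 2 1 (by decide), hg 3 1 (by decide),
      hg 0 2 (by decide), hg 1 2 (by decide), hg 3 2 (by decide),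
      hg 0 3 (by decide), hg 1 3 (by decide), hg 2 3 (by decide)]
    norm_num
  have h1 : ∑ p : Fin 2 × Fin 2 × Fin 2 × Fin 2,
      Complex.normSq (T p.1 p.2.1 p.2.2.1 p.2.2.2) = 0 := by
    simp only [Complex.mul_conj] at hzero
    rw [← Complex.ofReal_sum] at hzero
    exact_mod_cast hzero
  have h2 := (Finset.sum_eq_zero_iff_of_nonneg
    (fun p _ => Complex.normSq_nonneg (T p.1 p.2.1 p.2.2.1 p.2.2.2))).mp h1
  have h3 : T a b c d = 0 := by
    have := h2 (a, b, c, d) (Finset.mem_univ _)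
    exact Complex.normSq_eq_zero.mp this
  have := sub_eq_zero.mp h3
  exact this

lemma Gam_apply {n : ℕ} (ψ : Fin n → Fin 4 → Fin 2 → ℂ) (hψ : ∀ i, IsSICPOVM (ψ i))
    (p q : (Fin n → Fin 2) × (Fin n → Fin 2)) :
    Gam ψ p q = ∏ i, Mq (p.1 i) (p.2 i) (q.1 i) (q.2 i) := by
  have step1 : Gam ψ p q = ∑ k : Fin n → Fin 4, ∏ i,
      (ψ i (k i) (q.1 i) * (starRingEnd ℂ) (ψ i (k i) (p.1 i)) *
        ψ i (k i) (p.2 i) * (starRingEnd ℂ) (ψ i (k i) (q.2 i))) := by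
    simp only [Gam, Matrix.sum_apply, kroneckerMap_apply, transpose_apply, proj,
      vecMulVec_apply, Pi.star_apply, RCLike.star_def, prodState, map_prod]
    refine Finset.sum_congr rfl fun k _ => ?_
    rw [← Finset.prod_mul_distrib, ← Finset.prod_mul_distrib, ← Finset.prod_mul_distrib]
    exact Finset.prod_congr rfl fun i _ => by ring
  rw [step1]
  have step2 : ∏ i, Mq (p.1 i) (p.2 i) (q.1 i) (q.2 i)
      = ∏ i, ∑ κ ∈ (Finset.univ : Finset (Fin 4)),
          (fun (i : Fin n) (κ : Fin 4) => ψ i κ (q.1 i) * (starRingEnd ℂ) (ψ i κ (p.1 i)) *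
            ψ i κ (p.2 i) * (starRingEnd ℂ) (ψ i κ (q.2 i))) i κ :=
    Finset.prod_congr rfl fun i _ => (sic_sum (ψ i) (hψ i) _ _ _ _).symm
  rw [step2, Finset.prod_univ_sum, Fintype.piFinset_univ]

def csq : ℂ := (((Real.sqrt 2)⁻¹ : ℝ) : ℂ)

lemma csq_mul : csq * csq = 1/2 := by
  rw [csq, ← Complex.ofReal_mul, ← mul_inv, Real.mul_self_sqrt (by norm_num)]
  norm_num

lemma csq_conj : (starRingEnd ℂ) csq = csq := Complex.conj_ofReal _

def uvec (l x : Fin 2 × Fin 2) : ℂ :=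
  if l = (0,0) then (if x.1 = x.2 then csq else 0)
  else if l = (1,1) then (if x = (0,0) then csq else if x = (1,1) then -csq else 0)
  else if l = x then 1 else 0

def lam (l : Fin 2 × Fin 2) : ℝ := if l = (0,0) then 2 else 2/3

lemma uvec_ortho (l l' : Fin 2 × Fin 2) :
    ∑ x : Fin 2 × Fin 2, (starRingEnd ℂ) (uvec l x) * uvec l' x
      = if l = l' then 1 else 0 := by
  have h := csq_mul
  fin_cases l <;> fin_cases l' <;>
    simp [uvec, Fintype.sum_prod_type, Fin.sum_univ_two, csq_conj, Prod.ext_iff] <;>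
    ring_nf <;>
    norm_num [csq, ← Complex.ofReal_pow, Real.sq_sqrt]

lemma uvec_eigen (l : Fin 2 × Fin 2) (x1 x2 : Fin 2) :
    ∑ y : Fin 2 × Fin 2, Mq x1 x2 y.1 y.2 * uvec l y = (lam l : ℂ) * uvec l (x1, x2) := by
  fin_cases l <;> fin_cases x1 <;> fin_cases x2 <;>
    norm_num [Mq, uvec, lam, Fintype.sum_prod_type, Fin.sum_univ_two, Prod.ext_iff] <;>
    ring

def Umat (n : ℕ) : Matrix ((Fin n → Fin 2) × (Fin n → Fin 2)) ((Fin n → Fin 2) × (Fin n → Fin 2)) ℂ :=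
  fun p s => ∏ i, uvec (s.1 i, s.2 i) (p.1 i, p.2 i)

def del {n : ℕ} (s : (Fin n → Fin 2) × (Fin n → Fin 2)) : ℝ := ∏ i, lam (s.1 i, s.2 i)

lemma sum_factor {n : ℕ} (F : Fin n → (Fin 2 × Fin 2) → ℂ) :
    ∑ p : (Fin n → Fin 2) × (Fin n → Fin 2), ∏ i, F i (p.1 i, p.2 i)
      = ∏ i, ∑ x : Fin 2 × Fin 2, F i x := by
  have e := Equiv.arrowProdEquivProdArrow (Fin n) (fun _ => Fin 2) (fun _ => Fin 2)
  rw [show (∑ p : (Fin n → Fin 2) × (Fin n → Fin 2), ∏ i, F i (p.1 i, p.2 i))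
      = ∑ g : Fin n → Fin 2 × Fin 2, ∏ i, F i (g i) from
    (Fintype.sum_equiv (Equiv.arrowProdEquivProdArrow (Fin n) (fun _ => Fin 2) (fun _ => Fin 2)) _ _
      (fun g => Finset.prod_congr rfl fun i _ => by
        simp [Equiv.arrowProdEquivProdArrow])).symm]
  rw [Finset.prod_univ_sum, Fintype.piFinset_univ]

lemma Umat_unitary (n : ℕ) : (Umat n)ᴴ * Umat n = 1 := by
  ext s t
  rw [Matrix.mul_apply]
  simp only [conjTranspose_apply, RCLike.star_def, Umat, map_prod, ← Finset.prod_mul_distrib]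
  rw [sum_factor (fun i x => (starRingEnd ℂ) (uvec (s.1 i, s.2 i) x) * uvec (t.1 i, t.2 i) x)]
  simp only [uvec_ortho]
  rw [Matrix.one_apply]
  by_cases h : s = t
  · subst h; simp
  · have hex : ∃ i, (s.1 i, s.2 i) ≠ (t.1 i, t.2 i) := by
      by_contra hc
      push_neg at hc
      exact h (Prod.ext (funext fun i => congrArg Prod.fst (hc i))
        (funext fun i => congrArg Prod.snd (hc i)))
    obtain ⟨i, hi⟩ := hex
    rw [if_neg h]
    exact Finset.prod_eq_zero (Finset.mem_univ i) (if_neg hi)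

set_option maxHeartbeats 1600000 in
lemma Gam_mul_Umat {n : ℕ} (ψ : Fin n → Fin 4 → Fin 2 → ℂ) (hψ : ∀ i, IsSICPOVM (ψ i)) :
    Gam ψ * Umat n = Umat n * Matrix.diagonal (fun s => ((del s : ℝ) : ℂ)) := by
  ext p s
  rw [Matrix.mul_apply, Matrix.mul_diagonal]
  calc (∑ q : (Fin n → Fin 2) × (Fin n → Fin 2), Gam ψ p q * Umat n q s)
      = ∑ q : (Fin n → Fin 2) × (Fin n → Fin 2), ∏ i,
          (fun (i : Fin n) (y : Fin 2 × Fin 2) =>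
            Mq (p.1 i) (p.2 i) y.1 y.2 * uvec (s.1 i, s.2 i) y) i (q.1 i, q.2 i) := by
        refine Finset.sum_congr rfl fun q _ => ?_
        rw [Gam_apply ψ hψ, Umat, ← Finset.prod_mul_distrib]
    _ = ∏ i, ∑ y : Fin 2 × Fin 2, Mq (p.1 i) (p.2 i) y.1 y.2 * uvec (s.1 i, s.2 i) y :=
        sum_factor (fun (i : Fin n) (y : Fin 2 × Fin 2) =>
            Mq (p.1 i) (p.2 i) y.1 y.2 * uvec (s.1 i, s.2 i) y)
    _ = ∏ i, ((lam (s.1 i, s.2 i) : ℂ) * uvec (s.1 i, s.2 i) (p.1 i, p.2 i)) := by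
        exact Finset.prod_congr rfl fun i _ => uvec_eigen _ _ _
    _ = Umat n p s * ((del s : ℝ) : ℂ) := by
        rw [Finset.prod_mul_distrib, Umat, del, Complex.ofReal_prod, mul_comm]

lemma charpoly_conj {m : Type*} [Fintype m] [DecidableEq m] (A V W : Matrix m m ℂ)
    (h1 : V * W = 1) : (V * A * W).charpoly = A.charpoly := by
  have hmap : ∀ (P Q : Matrix m m ℂ), (P * Q).map (⇑(C : ℂ →+* ℂ[X]))
      = P.map C * Q.map C := fun P Q => Matrix.map_mul
  have hone : (V.map (C : ℂ →+* ℂ[X])) * (W.map C) = 1 := by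
    rw [← hmap, h1]
    exact Matrix.map_one _ (map_zero C) (map_one C)
  have hscal : V.map (C : ℂ →+* ℂ[X]) * Matrix.scalar m (X : ℂ[X]) * W.map C
      = Matrix.scalar m (X : ℂ[X]) := by
    have h2 : Matrix.scalar m (X : ℂ[X]) * W.map C = W.map C * Matrix.scalar m (X : ℂ[X]) :=
      (Matrix.scalar_commute (X : ℂ[X]) (fun r' => Commute.all _ _) (W.map C)).eq
    rw [Matrix.mul_assoc, h2, ← Matrix.mul_assoc, hone, Matrix.one_mul]
  have hc : charmatrix (V * A * W) = V.map C * charmatrix A * W.map C := by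
    unfold charmatrix
    rw [RingHom.mapMatrix_apply, RingHom.mapMatrix_apply]
    rw [show ((V * A * W).map (C : ℂ →+* ℂ[X])) = V.map C * A.map C * W.map C by
      rw [← hmap, ← hmap]]
    rw [Matrix.mul_sub, Matrix.sub_mul, hscal]
  unfold Matrix.charpoly
  rw [hc, Matrix.det_mul, Matrix.det_mul, mul_comm, ← mul_assoc, ← Matrix.det_mul,
    mul_eq_one_comm.mp hone]
  simp

lemma charpoly_diag {m : Type*} [Fintype m] [DecidableEq m] (d : m → ℂ) :
    (Matrix.diagonal d).charpoly = ∏ i, (X - C (d i)) := by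
  have hc : charmatrix (Matrix.diagonal d) = Matrix.diagonal (fun i => X - C (d i)) := by
    apply Matrix.ext; intro i j
    by_cases h : i = j
    · subst h
      simp [charmatrix_apply_eq, Matrix.diagonal_apply_eq]
    · rw [charmatrix_apply_ne _ _ _ h, Matrix.diagonal_apply_ne _ h, Matrix.diagonal_apply_ne _ h]
      simp
  unfold Matrix.charpoly
  rw [hc, Matrix.det_diagonal]

lemma Mq_conj (a b c d : Fin 2) : (starRingEnd ℂ) (Mq a b c d) = Mq c d a b := by
  fin_cases a <;> fin_cases b <;> fin_cases c <;> fin_cases d <;> norm_num [Mq, map_div₀, Complex.conj_ofNat]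

lemma Gam_herm {n : ℕ} (ψ : Fin n → Fin 4 → Fin 2 → ℂ) (hψ : ∀ i, IsSICPOVM (ψ i)) :
    (Gam ψ).IsHermitian := by
  apply Matrix.ext
  intro p q
  rw [conjTranspose_apply, Gam_apply ψ hψ, Gam_apply ψ hψ, RCLike.star_def, map_prod]
  exact Finset.prod_congr rfl fun i _ => Mq_conj _ _ _ _

lemma Gam_charpoly {n : ℕ} (ψ : Fin n → Fin 4 → Fin 2 → ℂ) (hψ : ∀ i, IsSICPOVM (ψ i)) :
    (Gam ψ).charpoly = ∏ s : (Fin n → Fin 2) × (Fin n → Fin 2), (X - C ((del s : ℝ) : ℂ)) := by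
  have hU : (Umat n)ᴴ * Umat n = 1 := Umat_unitary n
  have hU' : Umat n * (Umat n)ᴴ = 1 := mul_eq_one_comm.mp hU
  have hdec : Gam ψ = Umat n * Matrix.diagonal (fun s => ((del s : ℝ) : ℂ)) * (Umat n)ᴴ := by
    calc Gam ψ = Gam ψ * (Umat n * (Umat n)ᴴ) := by rw [hU', Matrix.mul_one]
    _ = (Gam ψ * Umat n) * (Umat n)ᴴ := by rw [Matrix.mul_assoc]
    _ = _ := by rw [Gam_mul_Umat ψ hψ]
  rw [hdec, charpoly_conj _ _ _ hU', charpoly_diag]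

lemma Gam_charpoly_eig {n : ℕ} (ψ : Fin n → Fin 4 → Fin 2 → ℂ) (h : (Gam ψ).IsHermitian) :
    (Gam ψ).charpoly
      = ∏ i : (Fin n → Fin 2) × (Fin n → Fin 2), (X - C ((h.eigenvalues i : ℝ) : ℂ)) := by
  have hU' : (h.eigenvectorUnitary : Matrix ((Fin n → Fin 2) × (Fin n → Fin 2))
        ((Fin n → Fin 2) × (Fin n → Fin 2)) ℂ)
      * star (h.eigenvectorUnitary : Matrix ((Fin n → Fin 2) × (Fin n → Fin 2))
        ((Fin n → Fin 2) × (Fin n → Fin 2)) ℂ) = 1 :=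
    Matrix.mem_unitaryGroup_iff.mp h.eigenvectorUnitary.2
  conv_lhs => rw [h.spectral_theorem, Unitary.conjStarAlgAut_apply]
  rw [charpoly_conj _ _ _ hU', charpoly_diag]
  rfl

lemma roots_eq {ι : Type*} [Fintype ι] (f : ι → ℂ) :
    (∏ i, (X - C (f i))).roots = Finset.univ.val.map f := by
  have h : ∏ i, (X - C (f i)) = ((Finset.univ.val.map f).map (fun a => X - C a)).prod := by
    rw [Multiset.map_map]; rfl
  rw [h, Polynomial.roots_multiset_prod_X_sub_C]

lemma eig_multiset {n : ℕ} (ψ : Fin n → Fin 4 → Fin 2 → ℂ) (hψ : ∀ i, IsSICPOVM (ψ i))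
    (h : (Gam ψ).IsHermitian) :
    Finset.univ.val.map (fun i => ((h.eigenvalues i : ℝ) : ℂ))
      = Finset.univ.val.map (fun s : (Fin n → Fin 2) × (Fin n → Fin 2) => ((del s : ℝ) : ℂ)) := by
  rw [← roots_eq, ← roots_eq, ← Gam_charpoly ψ hψ, ← Gam_charpoly_eig ψ h]

def wt {n : ℕ} (s : (Fin n → Fin 2) × (Fin n → Fin 2)) : ℕ :=
  (Finset.univ.filter fun i => (s.1 i, s.2 i) ≠ ((0 : Fin 2), (0 : Fin 2))).card

lemma wt_le {n : ℕ} (s : (Fin n → Fin 2) × (Fin n → Fin 2)) : wt s ≤ n :=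
  le_trans (Finset.card_filter_le _ _) (by simp)

lemma del_eq {n : ℕ} (s : (Fin n → Fin 2) × (Fin n → Fin 2)) :
    del s = 2^n * ((3:ℝ)⁻¹)^(wt s) := by
  rw [del, ← Finset.prod_filter_mul_prod_filter_not Finset.univ
    (fun i => (s.1 i, s.2 i) = ((0 : Fin 2), (0 : Fin 2)))]
  have h1 : ∏ i ∈ (Finset.univ.filter fun i => (s.1 i, s.2 i) = ((0 : Fin 2), (0 : Fin 2))),
      lam (s.1 i, s.2 i)
      = 2 ^ (Finset.univ.filter fun i => (s.1 i, s.2 i) = ((0 : Fin 2), (0 : Fin 2))).card := by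
    rw [Finset.prod_congr rfl (fun i hi => ?_), Finset.prod_const]
    rw [lam, if_pos (Finset.mem_filter.mp hi).2]
  have h2 : ∏ i ∈ (Finset.univ.filter fun i => ¬ (s.1 i, s.2 i) = ((0 : Fin 2), (0 : Fin 2))),
      lam (s.1 i, s.2 i) = (2/3) ^ wt s := by
    rw [Finset.prod_congr rfl (fun i hi => ?_), Finset.prod_const, wt]
    rw [lam, if_neg (Finset.mem_filter.mp hi).2]
  have hcard : (Finset.univ.filter fun i => (s.1 i, s.2 i) = ((0 : Fin 2), (0 : Fin 2))).card
      = n - wt s := by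
    have h3 := Finset.card_filter_add_card_filter_not (s := (Finset.univ : Finset (Fin n)))
      (p := fun i => (s.1 i, s.2 i) = ((0 : Fin 2), (0 : Fin 2)))
    simp only [Finset.card_univ, Fintype.card_fin] at h3
    have h4 : wt s = (Finset.univ.filter
        fun i => ¬ (s.1 i, s.2 i) = ((0 : Fin 2), (0 : Fin 2))).card := rfl
    omega
  rw [h1, h2, hcard]
  have h5 := pow_sub_mul_pow (2:ℝ) (wt_le s)
  rw [show (2:ℝ)/3 = 2 * 3⁻¹ by norm_num, mul_pow]
  linear_combination ((3:ℝ)⁻¹ ^ (wt s)) * h5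

lemma pow3_cases (w : ℕ) : (w = 0 ∧ ((3:ℝ)⁻¹)^w = 1) ∨ (w = 1 ∧ ((3:ℝ)⁻¹)^w = 3⁻¹)
    ∨ (2 ≤ w ∧ ((3:ℝ)⁻¹)^w ≤ 9⁻¹) := by
  match w with
  | 0 => left; simp
  | 1 => right; left; simp
  | (k+2) =>
    right; right
    refine ⟨by omega, ?_⟩
    calc ((3:ℝ)⁻¹)^(k+2) ≤ ((3:ℝ)⁻¹)^2 :=
          pow_le_pow_of_le_one (by norm_num) (by norm_num) (by omega)
    _ = 9⁻¹ := by norm_num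

lemma del_pos {n : ℕ} (s : (Fin n → Fin 2) × (Fin n → Fin 2)) : 0 < del s := by
  rw [del_eq]; positivity

lemma del_le {n : ℕ} (s : (Fin n → Fin 2) × (Fin n → Fin 2)) : del s ≤ 2^n := by
  rw [del_eq]
  have h1 : ((3:ℝ)⁻¹)^(wt s) ≤ 1 := pow_le_one₀ (by norm_num) (by norm_num)
  nlinarith [pow_pos (show (0:ℝ) < 2 by norm_num) n]

lemma del_eq_top_iff {n : ℕ} (s : (Fin n → Fin 2) × (Fin n → Fin 2)) :
    del s = 2^n ↔ wt s = 0 := by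
  have h2 : (0:ℝ) < 2^n := by positivity
  rw [del_eq]
  rcases pow3_cases (wt s) with ⟨h, hv⟩ | ⟨h, hv⟩ | ⟨h, hv⟩
  · rw [hv, h]; simp
  · rw [hv]
    constructor
    · intro hh; exfalso; nlinarith
    · intro hh; omega
  · constructor
    · intro hh; exfalso; nlinarith
    · intro hh; omega

lemma del_eq_sec_iff {n : ℕ} (s : (Fin n → Fin 2) × (Fin n → Fin 2)) :
    del s = 2^n/3 ↔ wt s = 1 := by
  have h2 : (0:ℝ) < 2^n := by positivity
  rw [del_eq]
  rcases pow3_cases (wt s) with ⟨h, hv⟩ | ⟨h, hv⟩ | ⟨h, hv⟩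
  · rw [hv]
    constructor
    · intro hh; exfalso; nlinarith
    · intro hh; omega
  · rw [hv]
    constructor
    · intro _; exact h
    · intro _; ring
  · constructor
    · intro hh; exfalso; nlinarith
    · intro hh; omega

lemma del_lt {n : ℕ} (s : (Fin n → Fin 2) × (Fin n → Fin 2)) (h0 : wt s ≠ 0) (h1 : wt s ≠ 1) :
    del s < 2^n/3 := by
  have h2 : (0:ℝ) < 2^n := by positivity
  rw [del_eq]
  rcases pow3_cases (wt s) with ⟨h, hv⟩ | ⟨h, hv⟩ | ⟨h, hv⟩
  · omega
  · omega
  · nlinarith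

lemma count_wt0 {n : ℕ} :
    (Finset.univ.filter fun s : (Fin n → Fin 2) × (Fin n → Fin 2) => wt s = 0).card = 1 := by
  rw [Finset.card_eq_one]
  refine ⟨((fun _ => 0), (fun _ => 0)), ?_⟩
  ext s
  simp only [Finset.mem_filter, Finset.mem_univ, true_and, Finset.mem_singleton]
  constructor
  · intro hs
    rw [wt, Finset.card_eq_zero, Finset.filter_eq_empty_iff] at hs
    have h : ∀ i, (s.1 i, s.2 i) = ((0 : Fin 2), (0 : Fin 2)) := by
      intro i
      have := hs (Finset.mem_univ i)
      simpa using this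
    exact Prod.ext (funext fun i => congrArg Prod.fst (h i))
      (funext fun i => congrArg Prod.snd (h i))
  · rintro rfl
    rw [wt, Finset.card_eq_zero, Finset.filter_eq_empty_iff]
    intro i _
    simp

lemma count_wt1 {n : ℕ} :
    (Finset.univ.filter fun s : (Fin n → Fin 2) × (Fin n → Fin 2) => wt s = 1).card = 3 * n := by
  have hcard : (((Finset.univ : Finset (Fin 2 × Fin 2)).filter
      fun x => x ≠ ((0 : Fin 2), (0 : Fin 2))) ×ˢ (Finset.univ : Finset (Fin n))).card = 3 * n := by
    have h3 : ((Finset.univ : Finset (Fin 2 × Fin 2)).filter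
        fun x => x ≠ ((0 : Fin 2), (0 : Fin 2))).card = 3 := by decide
    rw [Finset.card_product, h3, Finset.card_univ, Fintype.card_fin]
  rw [← hcard]
  refine (Finset.card_bij (fun a _ =>
    ((fun j => if j = a.2 then a.1.1 else 0), (fun j => if j = a.2 then a.1.2 else 0)))
    ?_ ?_ ?_).symm
  · -- maps into the filter set
    intro a ha
    have ha1 : a.1 ≠ ((0 : Fin 2), (0 : Fin 2)) :=
      (Finset.mem_filter.mp (Finset.mem_product.mp ha).1).2
    simp only [Finset.mem_filter, Finset.mem_univ, true_and]
    have hset : (Finset.univ.filter fun i : Fin n =>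
        ((if i = a.2 then a.1.1 else 0 : Fin 2), (if i = a.2 then a.1.2 else 0 : Fin 2))
          ≠ ((0 : Fin 2), (0 : Fin 2))) = {a.2} := by
      ext i
      rw [Finset.mem_filter, Finset.mem_singleton]
      by_cases hi : i = a.2
      · subst hi
        rw [if_pos rfl, if_pos rfl]
        constructor
        · intro _; rfl
        · intro _
          refine ⟨Finset.mem_univ _, fun hc => ha1 ?_⟩
          rwa [Prod.mk.eta] at hc
      · rw [if_neg hi, if_neg hi]
        constructor
        · intro hh; exact absurd rfl hh.2
        · intro hh; exact absurd hh hi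
    rw [wt, hset, Finset.card_singleton]
  · -- injective
    intro a ha b hb hab
    have ha1 : a.1 ≠ ((0 : Fin 2), (0 : Fin 2)) :=
      (Finset.mem_filter.mp (Finset.mem_product.mp ha).1).2
    have hab1 := congrArg Prod.fst hab
    have hab2 := congrArg Prod.snd hab
    simp only at hab1 hab2
    by_cases h : a.2 = b.2
    · have h1 := congrFun hab1 a.2
      have h2 := congrFun hab2 a.2
      rw [if_pos rfl, if_pos h] at h1 h2
      exact Prod.ext (Prod.ext h1 h2) h
    · exfalso
      have h1 := congrFun hab1 a.2
      have h2 := congrFun hab2 a.2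
      rw [if_pos rfl, if_neg h] at h1 h2
      exact ha1 (Prod.ext h1 h2)
  · -- surjective
    intro s hs
    have hs1 : wt s = 1 := (Finset.mem_filter.mp hs).2
    rw [wt, Finset.card_eq_one] at hs1
    obtain ⟨i₀, hi₀⟩ := hs1
    have hmem : i₀ ∈ Finset.univ.filter
        fun i => (s.1 i, s.2 i) ≠ ((0 : Fin 2), (0 : Fin 2)) := by
      rw [hi₀]; exact Finset.mem_singleton_self _
    have hne : (s.1 i₀, s.2 i₀) ≠ ((0 : Fin 2), (0 : Fin 2)) := (Finset.mem_filter.mp hmem).2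
    have hz : ∀ j, j ≠ i₀ → (s.1 j, s.2 j) = ((0 : Fin 2), (0 : Fin 2)) := by
      intro j hj
      by_contra hc
      have : j ∈ Finset.univ.filter
          fun i => (s.1 i, s.2 i) ≠ ((0 : Fin 2), (0 : Fin 2)) :=
        Finset.mem_filter.mpr ⟨Finset.mem_univ _, hc⟩
      rw [hi₀, Finset.mem_singleton] at this
      exact hj this
    refine ⟨((s.1 i₀, s.2 i₀), i₀), ?_, ?_⟩
    · exact Finset.mem_product.mpr ⟨Finset.mem_filter.mpr ⟨Finset.mem_univ _, hne⟩,
        Finset.mem_univ _⟩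
    · refine Prod.ext (funext fun j => ?_) (funext fun j => ?_)
      · by_cases hj : j = i₀
        · subst hj; simp
        · simp only [if_neg hj]
          exact (congrArg Prod.fst (hz j hj)).symm
      · by_cases hj : j = i₀
        · subst hj; simp
        · simp only [if_neg hj]
          exact (congrArg Prod.snd (hz j hj)).symm

lemma filter_card_eq_count {α : Type*} [Fintype α] (u : α → ℝ) (t : ℝ) :
    (Finset.univ.filter fun i => u i = t).card
      = Multiset.count ((t : ℝ) : ℂ) (Finset.univ.val.map (fun i => ((u i : ℝ) : ℂ))) := by
  rw [Multiset.count_map]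
  have heq : Multiset.filter (fun a => ((t : ℝ) : ℂ) = ((u a : ℝ) : ℂ)) Finset.univ.val
      = Multiset.filter (fun a => u a = t) Finset.univ.val :=
    Multiset.filter_congr (fun a _ =>
      ⟨fun hh => (Complex.ofReal_inj.mp hh).symm, fun hh => by rw [hh]⟩)
  rw [heq]
  rfl

lemma count_transfer {ι κ : Type*} [Fintype ι] [Fintype κ] (f : ι → ℝ) (g : κ → ℝ)
    (h : Finset.univ.val.map (fun i => ((f i : ℝ) : ℂ))
      = Finset.univ.val.map (fun s => ((g s : ℝ) : ℂ))) (t : ℝ) :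
    (Finset.univ.filter fun i => f i = t).card = (Finset.univ.filter fun s => g s = t).card := by
  calc (Finset.univ.filter fun i => f i = t).card
      = Multiset.count ((t : ℝ) : ℂ) (Finset.univ.val.map (fun i => ((f i : ℝ) : ℂ))) :=
        filter_card_eq_count f t
    _ = Multiset.count ((t : ℝ) : ℂ) (Finset.univ.val.map (fun s => ((g s : ℝ) : ℂ))) := by
        rw [h]
    _ = (Finset.univ.filter fun s => g s = t).card := (filter_card_eq_count g t).symm

/-- Spectrum of `Γ`: it is Hermitian positive semidefinite, the largest eigenvalue is
    `d = 2^n` with multiplicity 1, the second largest is `d/3` with multiplicity `3n`,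
    and all remaining eigenvalues are strictly less than `d/3`. -/
theorem Gam_spectrum (n : ℕ) (hn : 1 ≤ n)
    (ψ : Fin n → Fin 4 → Fin 2 → ℂ) (hψ : ∀ i, IsSICPOVM (ψ i)) :
    ∃ hΓ : (Gam ψ).IsHermitian,
      (Gam ψ).PosSemidef ∧
      (∀ i, hΓ.eigenvalues i ≤ 2 ^ n) ∧
      (Finset.univ.filter fun i => hΓ.eigenvalues i = 2 ^ n).card = 1 ∧
      (Finset.univ.filter fun i => hΓ.eigenvalues i = 2 ^ n / 3).card = 3 * n ∧
      (∀ i, hΓ.eigenvalues i ≠ 2 ^ n → hΓ.eigenvalues i ≠ 2 ^ n / 3 →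
        hΓ.eigenvalues i < 2 ^ n / 3) := by
  have hΓ := Gam_herm ψ hψ
  have hmem : ∀ i, ∃ s : (Fin n → Fin 2) × (Fin n → Fin 2), hΓ.eigenvalues i = del s := by
    intro i
    have h1 := eig_multiset ψ hψ hΓ
    have h2 : ((hΓ.eigenvalues i : ℝ) : ℂ)
        ∈ Finset.univ.val.map (fun j => ((hΓ.eigenvalues j : ℝ) : ℂ)) :=
      Multiset.mem_map_of_mem _ (Finset.mem_univ i)
    rw [h1] at h2
    obtain ⟨s, _, hs⟩ := Multiset.mem_map.mp h2
    exact ⟨s, (Complex.ofReal_inj.mp hs).symm⟩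
  refine ⟨hΓ, ?_, ?_, ?_, ?_, ?_⟩
  · refine hΓ.posSemidef_iff_eigenvalues_nonneg.mpr (fun i => ?_)
    obtain ⟨s, hs⟩ := hmem i
    rw [hs]
    exact (del_pos s).le
  · intro i
    obtain ⟨s, hs⟩ := hmem i
    rw [hs]
    exact del_le s
  · rw [count_transfer hΓ.eigenvalues del (eig_multiset ψ hψ hΓ) ((2:ℝ)^n)]
    have heq : (Finset.univ.filter fun s : (Fin n → Fin 2) × (Fin n → Fin 2) => del s = 2^n)
        = (Finset.univ.filter fun s => wt s = 0) :=
      Finset.filter_congr (fun s _ => del_eq_top_iff s)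
    rw [heq, count_wt0]
  · rw [count_transfer hΓ.eigenvalues del (eig_multiset ψ hψ hΓ) ((2:ℝ)^n/3)]
    have heq : (Finset.univ.filter fun s : (Fin n → Fin 2) × (Fin n → Fin 2) => del s = 2^n/3)
        = (Finset.univ.filter fun s => wt s = 1) :=
      Finset.filter_congr (fun s _ => del_eq_sec_iff s)
    rw [heq, count_wt1]
  · intro i hne1 hne2
    obtain ⟨s, hs⟩ := hmem i
    rw [hs] at hne1 hne2 ⊢
    exact del_lt s (fun h0 => hne1 ((del_eq_top_iff s).mpr h0))
      (fun h1 => hne2 ((del_eq_sec_iff s).mpr h1))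
end
end

section
/- Let n ≥ 1, d = 2^n, let Γ = Σ_k (ψ_k ψ_k†)^T ⊗ (ψ_k ψ_k†) be built from tensor products ψ_k = ψ_{1,k_1} ⊗ ⋯ ⊗ ψ_{n,k_n} of single-qubit SIC-POVM states, and let φ = (1/√d) Σ_{x=1}^d e_x ⊗ e_x ∈ ℂ^{d²}. Then the matrix B = (1/d)·Γ − φφ† is positive semidefinite. -/
open Matrix Polynomial
open scoped Kronecker ComplexOrder Classical

noncomputable section

lemma cinner_conj {m : Type*} [Fintype m] (v w : m → ℂ) :
    (starRingEnd ℂ) (cinner v w) = cinner w v := by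
  simp [cinner, map_sum, mul_comm]

lemma sic_frame {ψ : Fin 4 → Fin 2 → ℂ} (h : IsSICPOVM ψ) (a b : Fin 2) :
    ∑ k, (starRingEnd ℂ) (ψ k a) * ψ k b = if a = b then 2 else 0 := by
  set S : Fin 2 → Fin 2 → ℂ := fun a b => ∑ k, (starRingEnd ℂ) (ψ k a) * ψ k b with hS
  suffices hmain : S 0 0 = 2 ∧ S 1 1 = 2 ∧ S 0 1 = 0 ∧ S 1 0 = 0 by
    fin_cases a <;> fin_cases b <;>
      first
        | exact hmain.1
        | exact hmain.2.1
        | exact hmain.2.2.1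
        | exact hmain.2.2.2
  have hHerm : ∀ a b, (starRingEnd ℂ) (S a b) = S b a := by
    intro a b; simp [hS, map_sum, mul_comm]
  have h1 : S 0 0 + S 1 1 = 4 := by
    have : S 0 0 + S 1 1 = ∑ k, cinner (ψ k) (ψ k) := by
      simp [hS, cinner, Fin.sum_univ_two, Finset.sum_add_distrib]
    rw [this]; simp [h.1]
  have h2 : S 0 0 * S 0 0 + S 0 1 * S 1 0 + S 1 0 * S 0 1 + S 1 1 * S 1 1 = 8 := by
    have expand : ∀ a b : Fin 2, S a b * S b a
        = ∑ k : Fin 4, ∑ j : Fin 4,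
            ((starRingEnd ℂ) (ψ k a) * ψ k b) * ((starRingEnd ℂ) (ψ j b) * ψ j a) := by
      intro a b; rw [hS]; rw [Finset.sum_mul_sum]
    have expand2 : ∀ k j : Fin 4, cinner (ψ k) (ψ j) * cinner (ψ j) (ψ k)
        = ∑ a : Fin 2, ∑ b : Fin 2,
            ((starRingEnd ℂ) (ψ k a) * ψ j a) * ((starRingEnd ℂ) (ψ j b) * ψ k b) := by
      intro k j; rw [cinner, cinner, Finset.sum_mul_sum]
    have key : S 0 0 * S 0 0 + S 0 1 * S 1 0 + S 1 0 * S 0 1 + S 1 1 * S 1 1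
        = ∑ k : Fin 4, ∑ j : Fin 4, cinner (ψ k) (ψ j) * cinner (ψ j) (ψ k) := by
      simp only [expand, expand2, ← Finset.sum_add_distrib, Fin.sum_univ_two]
      apply Finset.sum_congr rfl; intro k _
      apply Finset.sum_congr rfl; intro j _
      ring
    rw [key]
    have hval : ∀ k j : Fin 4, cinner (ψ k) (ψ j) * cinner (ψ j) (ψ k)
        = if k = j then 1 else (1/3 : ℂ) := by
      intro k j
      by_cases hkj : k = j
      · subst hkj; simp [h.1 k]
      · have := h.2 k j hkj
        have hcc : cinner (ψ j) (ψ k) = (starRingEnd ℂ) (cinner (ψ k) (ψ j)) := by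
          rw [cinner_conj]
        rw [hcc, Complex.mul_conj]
        rw [Complex.normSq_eq_norm_sq, this]
        simp [hkj]
    have hsplit : ∀ x y : Fin 4, (if x = y then (1:ℂ) else 1/3)
        = (if x = y then (2/3:ℂ) else 0) + 1/3 := by
      intro x y; split <;> norm_num
    simp only [hval, hsplit, Finset.sum_add_distrib, Finset.sum_ite_eq,
      Finset.mem_univ, if_true, Finset.sum_const, Finset.card_univ]
    norm_num
  -- now conclude
  have q1 := Complex.normSq_nonneg (S 0 0 - 2)
  have q2 := Complex.normSq_nonneg (S 1 1 - 2)
  have q3 := Complex.normSq_nonneg (S 0 1)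
  have hreal : ((Complex.normSq (S 0 0 - 2) + Complex.normSq (S 1 1 - 2)
      + 2 * Complex.normSq (S 0 1) : ℝ) : ℂ) = 0 := by
    have e1 : ((Complex.normSq (S 0 0 - 2) : ℝ) : ℂ)
        = (S 0 0 - 2) * (S 0 0 - 2) := by
      rw [← Complex.mul_conj]
      congr 1
      rw [map_sub, hHerm 0 0, map_ofNat]
    have e2 : ((Complex.normSq (S 1 1 - 2) : ℝ) : ℂ)
        = (S 1 1 - 2) * (S 1 1 - 2) := by
      rw [← Complex.mul_conj]
      congr 1
      rw [map_sub, hHerm 1 1, map_ofNat]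
    have e3 : ((Complex.normSq (S 0 1) : ℝ) : ℂ) = S 0 1 * S 1 0 := by
      rw [← Complex.mul_conj]
      congr 1
      exact hHerm 0 1
    push_cast
    rw [e1, e2, e3]
    linear_combination h2 - 4 * h1
  rw [Complex.ofReal_eq_zero] at hreal
  have hz1 : Complex.normSq (S 0 0 - 2) = 0 := by linarith
  have hz2 : Complex.normSq (S 1 1 - 2) = 0 := by linarith
  have hz3 : Complex.normSq (S 0 1) = 0 := by linarith
  rw [Complex.normSq_eq_zero, sub_eq_zero] at hz1 hz2
  rw [Complex.normSq_eq_zero] at hz3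
  have hz4 : S 1 0 = 0 := by rw [← hHerm 0 1, hz3]; simp
  exact ⟨hz1, hz2, hz3, hz4⟩





/-- the vector whose projector is `(proj ψ)ᵀ ⊗ₖ proj ψ` -/
def wVec {n : ℕ} (ψ : Fin n → Fin 4 → Fin 2 → ℂ) (k : Fin n → Fin 4) :
    (Fin n → Fin 2) × (Fin n → Fin 2) → ℂ :=
  fun p => (starRingEnd ℂ) (prodState ψ k p.1) * prodState ψ k p.2

lemma proj_kron {n : ℕ} (ψ : Fin n → Fin 4 → Fin 2 → ℂ) (k : Fin n → Fin 4) :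
    (proj (prodState ψ k))ᵀ ⊗ₖ proj (prodState ψ k) = proj (wVec ψ k) := by
  ext ⟨a, b⟩ ⟨c, d⟩
  simp only [proj, wVec, Matrix.kroneckerMap_apply, Matrix.transpose_apply,
    Matrix.vecMulVec_apply, Pi.star_apply, RingHom.id_apply, star_mul',
    Complex.star_def, _root_.map_mul, Complex.conj_conj]
  ring

lemma sum_wVec {n : ℕ} (ψ : Fin n → Fin 4 → Fin 2 → ℂ) (hψ : ∀ i, IsSICPOVM (ψ i))
    (p : (Fin n → Fin 2) × (Fin n → Fin 2)) :
    ∑ k : Fin n → Fin 4, wVec ψ k p = if p.1 = p.2 then (2 : ℂ) ^ n else 0 := by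
  obtain ⟨x, y⟩ := p
  have h1 : ∀ k : Fin n → Fin 4, wVec ψ k (x, y)
      = ∏ i, (starRingEnd ℂ) (ψ i (k i) (x i)) * ψ i (k i) (y i) := by
    intro k
    simp [wVec, prodState, map_prod, Finset.prod_mul_distrib]
  simp only [h1]
  rw [← Fintype.prod_sum (fun (i : Fin n) (c : Fin 4) => (starRingEnd ℂ) (ψ i c (x i)) * ψ i c (y i))]
  have h2 : ∀ i : Fin n, ∑ c : Fin 4, (starRingEnd ℂ) (ψ i c (x i)) * ψ i c (y i)
      = if x i = y i then 2 else 0 := fun i => sic_frame (hψ i) (x i) (y i)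
  simp only [h2]
  by_cases hxy : x = y
  · subst hxy; simp
  · have : ∃ i, x i ≠ y i := by
      by_contra hc
      push_neg at hc
      exact hxy (funext hc)
    obtain ⟨i, hi⟩ := this
    rw [Finset.prod_eq_zero (Finset.mem_univ i) (by simp [hi])]
    simp [hxy]

lemma proj_quad {m : Type*} [Fintype m] (v x : m → ℂ) :
    star x ⬝ᵥ (proj v *ᵥ x) = (starRingEnd ℂ) (cinner v x) * cinner v x := by
  have : star x ⬝ᵥ (proj v *ᵥ x)
      = (∑ a, (starRingEnd ℂ) (x a) * v a) * (∑ b, (starRingEnd ℂ) (v b) * x b) := by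
    rw [Finset.sum_mul_sum]
    simp only [dotProduct, mulVec, proj, Matrix.vecMulVec_apply, Pi.star_apply,
      Complex.star_def, dotProduct]
    rw [Finset.sum_congr rfl]
    intro a _
    rw [Finset.mul_sum]
    apply Finset.sum_congr rfl
    intro b _
    ring
  rw [this]
  congr 1
  simp [cinner, map_sum, mul_comm]

lemma proj_herm {m : Type*} [Fintype m] (v : m → ℂ) : (proj v).IsHermitian := by
  ext a b
  simp [proj, Matrix.vecMulVec_apply, Matrix.conjTranspose_apply, mul_comm]

lemma sum_mulVec' {ι m : Type*} [Fintype m] (s : Finset ι) (A : ι → Matrix m m ℂ)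
    (x : m → ℂ) : (∑ k ∈ s, A k) *ᵥ x = ∑ k ∈ s, A k *ᵥ x := by
  ext i
  simp only [Matrix.mulVec, dotProduct, Matrix.sum_apply, Finset.sum_apply, Finset.sum_mul]
  rw [Finset.sum_comm]

lemma dotProduct_sum' {ι m : Type*} [Fintype m] (s : Finset ι) (v : m → ℂ)
    (f : ι → m → ℂ) : v ⬝ᵥ (∑ k ∈ s, f k) = ∑ k ∈ s, v ⬝ᵥ f k := by
  simp only [dotProduct, Finset.sum_apply, Finset.mul_sum]
  rw [Finset.sum_comm]

/-- The matrix `B = (1/d)Γ - φφ†` is positive semidefinite. -/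
theorem B_posSemidef (n : ℕ) (hn : 1 ≤ n)
    (ψ : Fin n → Fin 4 → Fin 2 → ℂ) (hψ : ∀ i, IsSICPOVM (ψ i)) :
    (((2 : ℂ) ^ n)⁻¹ • Gam ψ - proj (maxEnt n)).PosSemidef := by
  have hGam : Gam ψ = ∑ k : Fin n → Fin 4, proj (wVec ψ k) := by
    rw [Gam]; exact Finset.sum_congr rfl fun k _ => proj_kron ψ k
  rw [Matrix.posSemidef_iff_dotProduct_mulVec]
  constructor
  · -- Hermitian
    unfold Matrix.IsHermitian
    rw [Matrix.conjTranspose_sub, Matrix.conjTranspose_smul, hGam,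
      Matrix.conjTranspose_sum]
    congr 1
    · congr 1
      · simp
      · exact Finset.sum_congr rfl fun k _ => proj_herm (wVec ψ k)
    · exact proj_herm (maxEnt n)
  · intro x
    set c : (Fin n → Fin 4) → ℂ := fun k => cinner (wVec ψ k) x with hc
    set cφ : ℂ := cinner (maxEnt n) x with hcφ
    have hq : star x ⬝ᵥ ((((2 : ℂ) ^ n)⁻¹ • Gam ψ - proj (maxEnt n)) *ᵥ x)
        = ((2 : ℂ) ^ n)⁻¹ * ∑ k, (starRingEnd ℂ) (c k) * c k
          - (starRingEnd ℂ) cφ * cφ := by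
      rw [Matrix.sub_mulVec, dotProduct_sub, Matrix.smul_mulVec,
        dotProduct_smul, hGam, sum_mulVec', dotProduct_sum']
      simp only [proj_quad, smul_eq_mul, hc, hcφ]
    rw [hq]
    -- relation between sums
    set T : ℂ := ∑ a : Fin n → Fin 2, x (a, a) with hT
    have hsum : ∑ k, c k = (2 : ℂ) ^ n * T := by
      have : ∑ k, c k = ∑ p : (Fin n → Fin 2) × (Fin n → Fin 2),
          (starRingEnd ℂ) (∑ k : Fin n → Fin 4, wVec ψ k p) * x p := by
        simp only [hc, cinner, map_sum, Finset.sum_mul]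
        rw [Finset.sum_comm]
      rw [this]
      have : ∀ p : (Fin n → Fin 2) × (Fin n → Fin 2),
          (starRingEnd ℂ) (∑ k : Fin n → Fin 4, wVec ψ k p) * x p
          = if p.1 = p.2 then (2:ℂ)^n * x p else 0 := by
        intro p
        rw [sum_wVec ψ hψ p]
        split <;> simp [map_pow, map_ofNat]
      simp only [this]
      rw [Fintype.sum_prod_type]
      simp only [Finset.sum_ite_eq, Finset.mem_univ, if_true]
      rw [Finset.mul_sum]
    have hphi : cφ = (((Real.sqrt (2 ^ n))⁻¹ : ℝ) : ℂ) * T := by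
      rw [hcφ, cinner]
      have : ∀ p : (Fin n → Fin 2) × (Fin n → Fin 2),
          (starRingEnd ℂ) (maxEnt n p) * x p
          = if p.1 = p.2 then (((Real.sqrt (2 ^ n))⁻¹ : ℝ) : ℂ) * x p else 0 := by
        intro p
        rw [maxEnt]
        split <;> simp [Complex.conj_ofReal]
      simp only [this]
      rw [Fintype.sum_prod_type]
      simp only [Finset.sum_ite_eq, Finset.mem_univ, if_true]
      rw [Finset.mul_sum]
    -- pass to real numbers
    have habs : ∀ z : ℂ, (starRingEnd ℂ) z * z = ((Complex.normSq z : ℝ) : ℂ) := by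
      intro z; rw [mul_comm, Complex.mul_conj]
    have hcoe : (((2 : ℂ) ^ n)⁻¹ : ℂ) = ((((2:ℝ) ^ n)⁻¹ : ℝ) : ℂ) := by push_cast; ring
    have hform : ((2 : ℂ) ^ n)⁻¹ * ∑ k, (starRingEnd ℂ) (c k) * c k
          - (starRingEnd ℂ) cφ * cφ
        = (((((2:ℝ) ^ n)⁻¹ * ∑ k, Complex.normSq (c k)
            - Complex.normSq cφ : ℝ)) : ℂ) := by
      simp only [habs, hcoe]
      push_cast
      ring
    rw [hform]
    rw [Complex.zero_le_real]
    -- the real inequality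
    have hT2 : Complex.normSq cφ = ((2:ℝ)^n)⁻¹ * Complex.normSq T := by
      rw [hphi, Complex.normSq_mul, Complex.normSq_ofReal]
      have h2n : (0:ℝ) ≤ (2:ℝ)^n := by positivity
      rw [← Real.sqrt_inv, Real.mul_self_sqrt (by positivity)]
    rw [hT2]
    have hCS : Complex.normSq T ≤ ∑ k, Complex.normSq (c k) := by
      have h1 : ‖∑ k, c k‖ ≤ ∑ k, ‖c k‖ := by
        exact norm_sum_le Finset.univ c
      have h2 : (∑ k, ‖c k‖)^2
          ≤ (Finset.univ : Finset (Fin n → Fin 4)).card * ∑ k, ‖c k‖ ^ 2 :=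
        sq_sum_le_card_mul_sum_sq
      have hcard : ((Finset.univ : Finset (Fin n → Fin 4)).card : ℝ) = 4 ^ n := by
        simp [Finset.card_univ]
      have h3 : ‖∑ k, c k‖ = 2^n * ‖T‖ := by
        rw [hsum, norm_mul, norm_pow]; norm_num
      have h4 : (2^n * ‖T‖)^2 ≤ (4:ℝ)^n * ∑ k, ‖c k‖ ^ 2 := by
        calc (2^n * ‖T‖)^2 = ‖∑ k, c k‖ ^2 := by rw [h3]
          _ ≤ (∑ k, ‖c k‖)^2 := by
              apply pow_le_pow_left₀ (norm_nonneg _) h1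
          _ ≤ (4:ℝ)^n * ∑ k, ‖c k‖ ^ 2 := by
              rw [← hcard]; exact_mod_cast h2
      have h5 : ((2:ℝ)^n * ‖T‖)^2 = (4:ℝ)^n * ‖T‖ ^ 2 := by
        have h44 : (4:ℝ)^n = (2:ℝ)^n * 2^n := by
          rw [show (4:ℝ) = 2*2 by norm_num, mul_pow]
        rw [h44]; ring
      have h6 : ‖T‖ ^ 2 ≤ ∑ k, ‖c k‖ ^ 2 := by
        have h4n : (0:ℝ) < 4^n := by positivity
        nlinarith [h4, h5]
      calc Complex.normSq T = ‖T‖ ^ 2 := (Complex.sq_norm T).symm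
        _ ≤ ∑ k, ‖c k‖ ^ 2 := h6
        _ = ∑ k, Complex.normSq (c k) := by
            exact Finset.sum_congr rfl fun k _ => Complex.sq_norm (c k)
    have hpos : (0:ℝ) ≤ ((2:ℝ)^n)⁻¹ := by positivity
    nlinarith [hCS, hpos]
end
end

section
/- Let n ≥ 1, d = 2^n, let Γ = Σ_k (ψ_k ψ_k†)^T ⊗ (ψ_k ψ_k†) be built from tensor products ψ_k = ψ_{1,k_1} ⊗ ⋯ ⊗ ψ_{n,k_n} of single-qubit SIC-POVM states, and let φ = (1/√d) Σ_{x=1}^d e_x ⊗ e_x ∈ ℂ^{d²}. Then the matrix A = φφ† − (3/(2d))·Γ + (1/2)·I is positive semidefinite, where I is the d²×d² identity. -/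
open Matrix Polynomial
open scoped Kronecker ComplexOrder Classical

noncomputable section

/-! ### Auxiliary development -/

lemma sic_moment (ψ : Fin 4 → Fin 2 → ℂ) (hψ : IsSICPOVM ψ) (a b c d : Fin 2) :
    (∑ k : Fin 4, (starRingEnd ℂ) (ψ k a) * ψ k b * ψ k c * (starRingEnd ℂ) (ψ k d)) =
      2/3 * ((if a = c then 1 else 0) * (if b = d then 1 else 0)
           + (if a = b then 1 else 0) * (if c = d then 1 else 0)) := by
  obtain ⟨h1, h2⟩ := hψ
  set E : Fin 2 → Fin 2 → Fin 2 → Fin 2 → ℂ := fun a b c d =>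
    (∑ k : Fin 4, (starRingEnd ℂ) (ψ k a) * ψ k b * ψ k c * (starRingEnd ℂ) (ψ k d)) -
      2/3 * ((if a = c then 1 else 0) * (if b = d then 1 else 0)
           + (if a = b then 1 else 0) * (if c = d then 1 else 0)) with hE
  have p1 : ∀ k k', k ≠ k' →
      cinner (ψ k) (ψ k') * (starRingEnd ℂ) (cinner (ψ k) (ψ k')) = 1/3 := by
    intro k k' h
    rw [Complex.mul_conj, ← Complex.sq_norm, h2 k k' h]
    norm_num
  have q2 : ∀ k, (cinner (ψ k) (ψ k))^2 = 1 := fun k => by rw [h1 k]; norm_num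
  have q4 : ∀ k, (cinner (ψ k) (ψ k))^4 = 1 := fun k => by rw [h1 k]; norm_num
  have p2 : ∀ k k', k ≠ k' →
      (cinner (ψ k) (ψ k') * (starRingEnd ℂ) (cinner (ψ k) (ψ k')))^2 = 1/9 := by
    intro k k' h
    rw [p1 k k' h]; norm_num
  have hZ : ∑ a : Fin 2, ∑ b : Fin 2, ∑ c : Fin 2, ∑ d : Fin 2,
      E a b c d * (starRingEnd ℂ) (E a b c d) = 0 := by
    simp only [hE, cinner, Fin.sum_univ_four, Fin.sum_univ_two] at q4 q2 p2 ⊢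
    simp only [_root_.map_mul, map_add, _root_.map_sub, Complex.conj_conj, _root_.map_one,
      map_zero, map_ofNat, map_div₀] at p2 ⊢
    norm_num
    linear_combination q4 0 + q4 1 + q4 2 + q4 3
      - (8/3 : ℂ) * (q2 0 + q2 1 + q2 2 + q2 3)
      + p2 0 1 (by decide) + p2 0 2 (by decide) + p2 0 3 (by decide)
      + p2 1 0 (by decide) + p2 1 2 (by decide) + p2 1 3 (by decide)
      + p2 2 0 (by decide) + p2 2 1 (by decide) + p2 2 3 (by decide)
      + p2 3 0 (by decide) + p2 3 1 (by decide) + p2 3 2 (by decide)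
  have hZr : ∑ a : Fin 2, ∑ b : Fin 2, ∑ c : Fin 2, ∑ d : Fin 2,
      Complex.normSq (E a b c d) = 0 := by
    have : ((∑ a : Fin 2, ∑ b : Fin 2, ∑ c : Fin 2, ∑ d : Fin 2,
        Complex.normSq (E a b c d) : ℝ) : ℂ) = 0 := by
      push_cast
      rw [← hZ]
      refine Finset.sum_congr rfl fun a _ => Finset.sum_congr rfl fun b _ =>
        Finset.sum_congr rfl fun c _ => Finset.sum_congr rfl fun d _ => ?_
      rw [Complex.mul_conj]
    exact_mod_cast this
  have h0 : E a b c d = 0 := by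
    have ha := (Finset.sum_eq_zero_iff_of_nonneg (fun x _ => Finset.sum_nonneg fun _ _ =>
      Finset.sum_nonneg fun _ _ => Finset.sum_nonneg fun _ _ =>
        Complex.normSq_nonneg _)).mp hZr a (Finset.mem_univ a)
    have hb := (Finset.sum_eq_zero_iff_of_nonneg (fun x _ => Finset.sum_nonneg fun _ _ =>
      Finset.sum_nonneg fun _ _ => Complex.normSq_nonneg _)).mp ha b (Finset.mem_univ b)
    have hc := (Finset.sum_eq_zero_iff_of_nonneg (fun x _ => Finset.sum_nonneg fun _ _ =>
      Complex.normSq_nonneg _)).mp hb c (Finset.mem_univ c)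
    have hd := (Finset.sum_eq_zero_iff_of_nonneg (fun x _ =>
      Complex.normSq_nonneg _)).mp hc d (Finset.mem_univ d)
    exact Complex.normSq_eq_zero.mp hd
  rw [← sub_eq_zero]
  simpa [hE] using h0

def Phi : Matrix (Fin 2 × Fin 2) (Fin 2 × Fin 2) ℂ :=
  Matrix.of fun p q => if p.1 = p.2 ∧ q.1 = q.2 then 1/2 else 0

def Pm : Bool → Matrix (Fin 2 × Fin 2) (Fin 2 × Fin 2) ℂ :=
  fun b => if b then Phi else 1 - Phi

lemma Phi_herm : Phiᴴ = Phi := by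
  ext p q
  simp only [Phi, conjTranspose_apply, of_apply]
  split_ifs with h1 h2 h3 <;> norm_num <;> tauto

lemma Phi_mul_Phi : Phi * Phi = Phi := by
  ext p q
  simp only [Phi, mul_apply, of_apply, Fintype.sum_prod_type, Fin.sum_univ_two]
  split_ifs <;> norm_num <;> tauto

lemma Pm_posSemidef (b : Bool) : (Pm b).PosSemidef := by
  cases b
  · have h : Pm false = (1 - Phi)ᴴ * (1 - Phi) := by
      rw [conjTranspose_sub, conjTranspose_one, Phi_herm]
      rw [Matrix.sub_mul, Matrix.mul_sub, Matrix.mul_sub, Phi_mul_Phi]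
      simp [Pm]
    rw [h]; exact posSemidef_conjTranspose_mul_self _
  · have h : Pm true = Phiᴴ * Phi := by rw [Phi_herm, Phi_mul_Phi]; rfl
    rw [h]; exact posSemidef_conjTranspose_mul_self _

lemma prod_posSemidef {n : ℕ} (M : Fin n → Matrix (Fin 2 × Fin 2) (Fin 2 × Fin 2) ℂ)
    (hM : ∀ i, (M i).PosSemidef) :
    Matrix.PosSemidef (Matrix.of fun (p q : (Fin n → Fin 2) × (Fin n → Fin 2)) =>
      ∏ i, M i (p.1 i, p.2 i) (q.1 i, q.2 i)) := by
  choose B hB using fun i => (show ∃ B : Matrix (Fin 2 × Fin 2) (Fin 2 × Fin 2) ℂ, M i = Bᴴ * B by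
    open scoped MatrixOrder in exact CStarAlgebra.nonneg_iff_eq_star_mul_self.mp (hM i).nonneg)
  have key : (Matrix.of fun (p q : (Fin n → Fin 2) × (Fin n → Fin 2)) =>
      ∏ i, M i (p.1 i, p.2 i) (q.1 i, q.2 i)) =
      (Matrix.of fun (z : Fin n → Fin 2 × Fin 2) (p : (Fin n → Fin 2) × (Fin n → Fin 2)) =>
        ∏ i, B i (z i) (p.1 i, p.2 i))ᴴ *
      (Matrix.of fun (z : Fin n → Fin 2 × Fin 2) (p : (Fin n → Fin 2) × (Fin n → Fin 2)) =>
        ∏ i, B i (z i) (p.1 i, p.2 i)) := by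
    ext p q
    simp only [mul_apply, conjTranspose_apply, of_apply, star_prod]
    calc ∏ i, M i (p.1 i, p.2 i) (q.1 i, q.2 i)
        = ∏ i, ∑ w : Fin 2 × Fin 2,
            star (B i w (p.1 i, p.2 i)) * B i w (q.1 i, q.2 i) := by
          refine Finset.prod_congr rfl fun i _ => ?_
          rw [hB i, mul_apply]
          simp [conjTranspose_apply]
      _ = ∑ z : Fin n → Fin 2 × Fin 2, ∏ i,
            star (B i (z i) (p.1 i, p.2 i)) * B i (z i) (q.1 i, q.2 i) := by
          rw [Finset.prod_univ_sum]
          rw [Fintype.piFinset_univ]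
      _ = ∑ z : Fin n → Fin 2 × Fin 2,
            (∏ i, star (B i (z i) (p.1 i, p.2 i))) * ∏ i, B i (z i) (q.1 i, q.2 i) := by
          simp [Finset.prod_mul_distrib]
  rw [key]
  exact posSemidef_conjTranspose_mul_self _

lemma smul_posSemidef {m : Type*} [Fintype m] {M : Matrix m m ℂ} (hM : M.PosSemidef)
    {c : ℝ} (hc : 0 ≤ c) : ((c : ℂ) • M).PosSemidef := by
  constructor
  · unfold Matrix.IsHermitian
    rw [conjTranspose_smul, hM.1]
    congr 1
    simp
  · intro x
    have := mul_nonneg (Complex.zero_le_real.mpr hc) (hM.2 x)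
    convert this using 1
    simp only [Finsupp.sum, Finset.mul_sum, Matrix.smul_apply, smul_eq_mul]
    exact Finset.sum_congr rfl fun i _ => Finset.sum_congr rfl fun j _ => by ring

def QT {n : ℕ} (T : Fin n → Bool) :
    Matrix ((Fin n → Fin 2) × (Fin n → Fin 2)) ((Fin n → Fin 2) × (Fin n → Fin 2)) ℂ :=
  Matrix.of fun p q => ∏ i, Pm (T i) (p.1 i, p.2 i) (q.1 i, q.2 i)

lemma QT_posSemidef {n : ℕ} (T : Fin n → Bool) : (QT T).PosSemidef :=
  prod_posSemidef _ (fun _ => Pm_posSemidef _)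

def coefT {n : ℕ} (T : Fin n → Bool) : ℝ :=
  (if T = fun _ => true then 1 else 0) + 1/2
    - 3 ^ ((Finset.univ.filter fun i => T i = true).card + 1) / (2 * 3 ^ n)

lemma coefT_nonneg {n : ℕ} (T : Fin n → Bool) : 0 ≤ coefT T := by
  unfold coefT
  by_cases h : T = fun _ => true
  · rw [if_pos h, h]
    have hc : (Finset.univ.filter fun i : Fin n => (fun _ : Fin n => true) i = true).card = n := by
      simp
    rw [hc]
    have h3 : (0:ℝ) < 3 ^ n := by positivity
    rw [pow_succ]
    have hx : (3:ℝ)^n * 3 / (2 * 3^n) = 3/2 := by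
      field_simp
    rw [hx]
    norm_num
  · rw [if_neg h]
    have hlt : (Finset.univ.filter fun i => T i = true).card + 1 ≤ n := by
      have hsub : (Finset.univ.filter fun i => T i = true) ⊂ Finset.univ := by
        refine Finset.ssubset_univ_iff.mpr ?_
        intro hcon
        apply h
        funext i
        have := Finset.mem_filter.mp (hcon ▸ Finset.mem_univ i)
        simpa using this.2
      have := Finset.card_lt_card hsub
      simpa [Finset.card_univ] using this
    have hle : (3:ℝ) ^ ((Finset.univ.filter fun i => T i = true).card + 1) ≤ 3 ^ n :=
      pow_le_pow_right₀ (by norm_num) hlt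
    have h3 : (0:ℝ) < 3 ^ n := by positivity
    have : (3:ℝ) ^ ((Finset.univ.filter fun i => T i = true).card + 1) / (2 * 3 ^ n) ≤ 1/2 := by
      rw [div_le_div_iff₀ (by positivity) (by norm_num)]
      nlinarith
    linarith

lemma pm_expand (x1 x2 y1 y2 : Fin 2) :
    2/3 * ((if x1 = y1 then (1:ℂ) else 0) * (if x2 = y2 then 1 else 0)
         + (if x1 = x2 then 1 else 0) * (if y1 = y2 then 1 else 0)) =
    ∑ b : Bool, (if b then (2:ℂ) else 2/3) * Pm b (x1, x2) (y1, y2) := by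
  fin_cases x1 <;> fin_cases x2 <;> fin_cases y1 <;> fin_cases y2 <;>
    norm_num [Fintype.sum_bool, Pm, Phi, Matrix.one_apply, Matrix.sub_apply, Prod.ext_iff]

lemma maxEnt_entry {n : ℕ} (p q : (Fin n → Fin 2) × (Fin n → Fin 2)) :
    proj (maxEnt n) p q = ∏ i, Pm true (p.1 i, p.2 i) (q.1 i, q.2 i) := by
  have hPm : ∀ e f : Fin 2 × Fin 2, Pm true e f
      = if e.1 = e.2 ∧ f.1 = f.2 then (1/2 : ℂ) else 0 := fun e f => rfl
  simp only [proj, vecMulVec_apply, Pi.star_apply, maxEnt, hPm]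
  by_cases h : p.1 = p.2 ∧ q.1 = q.2
  · rw [if_pos h.1, if_pos h.2]
    have hprod : ∏ i, (if p.1 i = p.2 i ∧ q.1 i = q.2 i then (1/2 : ℂ) else 0)
        = (1/2 : ℂ) ^ n := by
      rw [Finset.prod_congr rfl (fun i _ => if_pos ⟨congrFun h.1 i, congrFun h.2 i⟩)]
      simp
    rw [hprod]
    have hr : ((Real.sqrt (2 ^ n))⁻¹ : ℝ) * (Real.sqrt (2 ^ n))⁻¹ = ((2:ℝ) ^ n)⁻¹ := by
      rw [← mul_inv, Real.mul_self_sqrt (by positivity)]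
    have hs : star ((((Real.sqrt (2 ^ n))⁻¹ : ℝ)) : ℂ)
        = (((Real.sqrt (2 ^ n))⁻¹ : ℝ) : ℂ) := by
      rw [Complex.star_def, Complex.conj_ofReal]
    rw [hs, ← Complex.ofReal_mul, hr]
    push_cast
    rw [one_div, inv_pow]
  · rw [not_and_or] at h
    have hz : ∃ i, ¬(p.1 i = p.2 i ∧ q.1 i = q.2 i) := by
      rcases h with h | h
      · obtain ⟨i, hi⟩ := Function.ne_iff.mp h
        exact ⟨i, fun hc => hi hc.1⟩
      · obtain ⟨i, hi⟩ := Function.ne_iff.mp h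
        exact ⟨i, fun hc => hi hc.2⟩
    obtain ⟨i, hi⟩ := hz
    have hzero : (∏ x : Fin n, if p.1 x = p.2 x ∧ q.1 x = q.2 x then (1/2:ℂ) else 0) = 0 :=
      Finset.prod_eq_zero (Finset.mem_univ i) (by rw [if_neg hi])
    rw [hzero]
    rcases h with h | h
    · rw [if_neg h]; simp
    · rw [if_neg h]; simp

lemma one_entry {n : ℕ} (p q : (Fin n → Fin 2) × (Fin n → Fin 2)) :
    (1 : Matrix ((Fin n → Fin 2) × (Fin n → Fin 2)) ((Fin n → Fin 2) × (Fin n → Fin 2)) ℂ) p q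
      = ∏ i, ∑ b : Bool, Pm b (p.1 i, p.2 i) (q.1 i, q.2 i) := by
  have hone : ∀ e f : Fin 2 × Fin 2, ∑ b : Bool, Pm b e f
      = (1 : Matrix (Fin 2 × Fin 2) (Fin 2 × Fin 2) ℂ) e f := by
    intro e f
    rw [Fintype.sum_bool]
    show Phi e f + (1 - Phi) e f = _
    rw [Matrix.sub_apply]
    ring
  rw [Finset.prod_congr rfl fun i _ => hone _ _]
  by_cases hpq : p = q
  · subst hpq
    rw [Matrix.one_apply_eq]
    exact (Finset.prod_eq_one (fun i _ => Matrix.one_apply_eq _)).symm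
  · rw [Matrix.one_apply_ne hpq]
    have hz : ∃ i, (p.1 i, p.2 i) ≠ (q.1 i, q.2 i) := by
      by_contra hcon
      push_neg at hcon
      exact hpq (Prod.ext (funext fun i => (Prod.ext_iff.mp (hcon i)).1)
        (funext fun i => (Prod.ext_iff.mp (hcon i)).2))
    obtain ⟨i, hi⟩ := hz
    exact (Finset.prod_eq_zero (Finset.mem_univ i)
      (show (1 : Matrix (Fin 2 × Fin 2) (Fin 2 × Fin 2) ℂ) (p.1 i, p.2 i) (q.1 i, q.2 i) = 0
        from Matrix.one_apply_ne hi)).symm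

lemma sum_pi_prod {n : ℕ} {κ : Type*} [Fintype κ] (f : Fin n → κ → ℂ) :
    ∑ k : Fin n → κ, ∏ i, f i (k i) = ∏ i, ∑ j, f i j := by
  rw [Finset.prod_univ_sum, Fintype.piFinset_univ]

lemma gam_entry {n : ℕ} (ψ : Fin n → Fin 4 → Fin 2 → ℂ) (hψ : ∀ i, IsSICPOVM (ψ i))
    (p q : (Fin n → Fin 2) × (Fin n → Fin 2)) :
    Gam ψ p q = ∏ i, ∑ b : Bool,
      (if b then (2:ℂ) else 2/3) * Pm b (p.1 i, p.2 i) (q.1 i, q.2 i) := by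
  have h1 : ∀ k : Fin n → Fin 4, ((proj (prodState ψ k))ᵀ ⊗ₖ proj (prodState ψ k)) p q
      = ∏ i, ((starRingEnd ℂ) (ψ i (k i) (p.1 i)) * ψ i (k i) (p.2 i) * ψ i (k i) (q.1 i)
          * (starRingEnd ℂ) (ψ i (k i) (q.2 i))) := by
    intro k
    simp only [kroneckerMap_apply, transpose_apply, proj, vecMulVec_apply, Pi.star_apply,
      prodState, star_prod]
    rw [← Finset.prod_mul_distrib, ← Finset.prod_mul_distrib, ← Finset.prod_mul_distrib]
    refine Finset.prod_congr rfl fun i _ => ?_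
    simp only [RCLike.star_def]
    ring
  have h2 : Gam ψ p q = ∑ k : Fin n → Fin 4, ∏ i,
      ((starRingEnd ℂ) (ψ i (k i) (p.1 i)) * ψ i (k i) (p.2 i) * ψ i (k i) (q.1 i)
          * (starRingEnd ℂ) (ψ i (k i) (q.2 i))) := by
    rw [Gam, Matrix.sum_apply]
    exact Finset.sum_congr rfl fun k _ => h1 k
  rw [h2]
  rw [show (∑ k : Fin n → Fin 4, ∏ i,
        ((starRingEnd ℂ) (ψ i (k i) (p.1 i)) * ψ i (k i) (p.2 i) * ψ i (k i) (q.1 i)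
          * (starRingEnd ℂ) (ψ i (k i) (q.2 i))))
      = ∏ i, ∑ j : Fin 4, ((starRingEnd ℂ) (ψ i j (p.1 i)) * ψ i j (p.2 i) * ψ i j (q.1 i)
          * (starRingEnd ℂ) (ψ i j (q.2 i)))
    from sum_pi_prod (fun i j => (starRingEnd ℂ) (ψ i j (p.1 i)) * ψ i j (p.2 i)
      * ψ i j (q.1 i) * (starRingEnd ℂ) (ψ i j (q.2 i)))]
  refine Finset.prod_congr rfl fun i _ => ?_
  rw [sic_moment (ψ i) (hψ i), pm_expand]

lemma coef_cast {n : ℕ} (T : Fin n → Bool) :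
    ((coefT T : ℝ) : ℂ) = (if T = (fun _ => true) then (1:ℂ) else 0) + 1/2
      - 3 / (2 * (2:ℂ)^n) * ∏ i, (if T i then (2:ℂ) else 2/3) := by
  obtain ⟨t, ht⟩ : ∃ t, (Finset.univ.filter fun i => T i = true).card = t := ⟨_, rfl⟩
  obtain ⟨s, hs⟩ : ∃ s, (Finset.univ.filter fun i => ¬ T i = true).card = s := ⟨_, rfl⟩
  have hcard : t + s = n := by
    rw [← ht, ← hs, Finset.card_filter_add_card_filter_not, Finset.card_univ,
      Fintype.card_fin]
  have hprod : (∏ i, (if T i then (2:ℂ) else 2/3)) = 2 ^ t * (2/3 : ℂ) ^ s := by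
    rw [Finset.prod_ite, Finset.prod_const, Finset.prod_const, ht, hs]
  have h1 : ((coefT T : ℝ) : ℂ)
      = (if T = (fun _ => true) then (1:ℂ) else 0) + 1/2 - 3^(t+1)/(2*3^n) := by
    unfold coefT
    rw [ht]
    push_cast [apply_ite (fun r : ℝ => (r : ℂ))]
    norm_num
  rw [h1, hprod]
  have key : (3:ℂ)^(t+1)/(2*3^(t+s)) = 3/(2*2^(t+s))*(2^t*(2/3)^s) := by
    field_simp
    rw [div_pow]
    field_simp
    ring
  rw [hcard] at key
  rw [key]

lemma A_eq {n : ℕ} (ψ : Fin n → Fin 4 → Fin 2 → ℂ) (hψ : ∀ i, IsSICPOVM (ψ i)) :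
    proj (maxEnt n) - (3 / (2 * (2 : ℂ) ^ n)) • Gam ψ + ((1 : ℂ) / 2) • 1
      = ∑ T : Fin n → Bool, ((coefT T : ℝ) : ℂ) • QT T := by
  ext p q
  simp only [Matrix.sub_apply, Matrix.add_apply, Matrix.smul_apply, smul_eq_mul,
    Matrix.sum_apply, QT, of_apply]
  rw [maxEnt_entry, gam_entry ψ hψ, one_entry]
  rw [show (∏ i, ∑ b : Bool, (if b then (2:ℂ) else 2/3) * Pm b (p.1 i, p.2 i) (q.1 i, q.2 i))
      = ∑ T : Fin n → Bool, ∏ i,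
          ((if T i then (2:ℂ) else 2/3) * Pm (T i) (p.1 i, p.2 i) (q.1 i, q.2 i)) from by
    rw [Finset.prod_univ_sum, Fintype.piFinset_univ]]
  rw [show (∏ i, ∑ b : Bool, Pm b (p.1 i, p.2 i) (q.1 i, q.2 i))
      = ∑ T : Fin n → Bool, ∏ i, Pm (T i) (p.1 i, p.2 i) (q.1 i, q.2 i) from by
    rw [Finset.prod_univ_sum, Fintype.piFinset_univ]]
  rw [show (∏ i, Pm true (p.1 i, p.2 i) (q.1 i, q.2 i))
      = ∑ T : Fin n → Bool, (if T = (fun _ => true) then (1:ℂ) else 0)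
          * ∏ i, Pm (T i) (p.1 i, p.2 i) (q.1 i, q.2 i) from by
    symm
    simp only [ite_mul, one_mul, zero_mul]
    rw [Finset.sum_ite_eq' Finset.univ (fun _ => true)
      (fun T => ∏ i, Pm (T i) (p.1 i, p.2 i) (q.1 i, q.2 i))]
    simp]
  simp only [Finset.prod_mul_distrib]
  rw [Finset.mul_sum, Finset.mul_sum, ← Finset.sum_sub_distrib, ← Finset.sum_add_distrib]
  refine Finset.sum_congr rfl fun T _ => ?_
  rw [coef_cast]
  ring

/-- The matrix `A = φφ† - (3/(2d))Γ + (1/2)I` is positive semidefinite. -/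
theorem A_posSemidef (n : ℕ) (hn : 1 ≤ n)
    (ψ : Fin n → Fin 4 → Fin 2 → ℂ) (hψ : ∀ i, IsSICPOVM (ψ i)) :
    (proj (maxEnt n) - (3 / (2 * (2 : ℂ) ^ n)) • Gam ψ
      + ((1 : ℂ) / 2) • (1 : Matrix ((Fin n → Fin 2) × (Fin n → Fin 2))
          ((Fin n → Fin 2) × (Fin n → Fin 2)) ℂ)).PosSemidef := by
  rw [A_eq ψ hψ]
  exact Finset.sum_induction _ _ (fun a b ha hb => ha.add hb) Matrix.PosSemidef.zero
    (fun T _ => smul_posSemidef (QT_posSemidef T) (coefT_nonneg T))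
end
end

section
/- Let ψ_1, ψ_2, ψ_3, ψ_4 be a single-qubit SIC-POVM, i.e., unit vectors in ℂ² with |⟨ψ_i, ψ_j⟩|² = 1/3 for all i ≠ j. Then Σ_{k=1}^4 ψ_k ψ_k† = 2·I, where I is the 2×2 identity matrix. -/
open Matrix Polynomial
open scoped Kronecker ComplexOrder Classical

noncomputable section

/-- A single-qubit SIC-POVM resolves the identity: `Σ_k ψ_k ψ_k† = 2 I`. -/
theorem sic_sum_proj (ψ : Fin 4 → Fin 2 → ℂ) (hψ : IsSICPOVM ψ) :
    ∑ k : Fin 4, proj (ψ k) = (2 : ℂ) • (1 : Matrix (Fin 2) (Fin 2) ℂ) := by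
  obtain ⟨h1, h2⟩ := hψ
  have h1' : ∀ k, (starRingEnd ℂ) (ψ k 0) * ψ k 0 + (starRingEnd ℂ) (ψ k 1) * ψ k 1 = 1 := by
    intro k; have := h1 k; simpa [cinner, Fin.sum_univ_two] using this
  have keyo : ∀ k k', k ≠ k' →
      ((starRingEnd ℂ) (ψ k 0) * ψ k' 0 + (starRingEnd ℂ) (ψ k 1) * ψ k' 1) *
      ((starRingEnd ℂ) (ψ k' 0) * ψ k 0 + (starRingEnd ℂ) (ψ k' 1) * ψ k 1) = 1/3 := by
    intro k k' h
    have e1 : ((starRingEnd ℂ) (ψ k 0) * ψ k' 0 + (starRingEnd ℂ) (ψ k 1) * ψ k' 1)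
        = cinner (ψ k) (ψ k') := by simp [cinner, Fin.sum_univ_two]
    have e2 : ((starRingEnd ℂ) (ψ k' 0) * ψ k 0 + (starRingEnd ℂ) (ψ k' 1) * ψ k 1)
        = (starRingEnd ℂ) (cinner (ψ k) (ψ k')) := by
      simp [cinner, Fin.sum_univ_two, map_add, _root_.map_mul, mul_comm]
    rw [e1, e2, Complex.mul_conj]
    have := h2 k k' h
    rw [← Complex.sq_norm]
    push_cast [this]
    norm_num
  set S : Fin 2 → Fin 2 → ℂ := fun a b => ∑ k : Fin 4, ψ k a * (starRingEnd ℂ) (ψ k b) with hSdef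
  have htr : S 0 0 + S 1 1 = 4 := by
    simp only [hSdef, Fin.sum_univ_four]
    linear_combination h1' 0 + h1' 1 + h1' 2 + h1' 3
  have htr2 : S 0 0 * S 0 0 + S 0 1 * S 1 0 + S 1 0 * S 0 1 + S 1 1 * S 1 1 = 8 := by
    simp only [hSdef, Fin.sum_univ_four]
    have d0 := h1' 0; have d1 := h1' 1; have d2 := h1' 2; have d3 := h1' 3
    linear_combination (((starRingEnd ℂ) (ψ 0 0) * ψ 0 0 + (starRingEnd ℂ) (ψ 0 1) * ψ 0 1) + 1) * d0
      + (((starRingEnd ℂ) (ψ 1 0) * ψ 1 0 + (starRingEnd ℂ) (ψ 1 1) * ψ 1 1) + 1) * d1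
      + (((starRingEnd ℂ) (ψ 2 0) * ψ 2 0 + (starRingEnd ℂ) (ψ 2 1) * ψ 2 1) + 1) * d2
      + (((starRingEnd ℂ) (ψ 3 0) * ψ 3 0 + (starRingEnd ℂ) (ψ 3 1) * ψ 3 1) + 1) * d3
      + keyo 0 1 (by decide) + keyo 0 2 (by decide) + keyo 0 3 (by decide)
      + keyo 1 0 (by decide) + keyo 1 2 (by decide) + keyo 1 3 (by decide)
      + keyo 2 0 (by decide) + keyo 2 1 (by decide) + keyo 2 3 (by decide)
      + keyo 3 0 (by decide) + keyo 3 1 (by decide) + keyo 3 2 (by decide)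
  have hherm : ∀ a b, (starRingEnd ℂ) (S a b) = S b a := by
    intro a b
    simp only [hSdef, map_sum, _root_.map_mul, Complex.conj_conj]
    exact Finset.sum_congr rfl fun k _ => mul_comm _ _
  have hc : ((Complex.normSq (S 0 0 - 2) + Complex.normSq (S 0 1)
      + Complex.normSq (S 1 0) + Complex.normSq (S 1 1 - 2) : ℝ) : ℂ) = 0 := by
    push_cast [← Complex.mul_conj]
    simp only [map_sub, hherm, Complex.conj_ofNat]
    linear_combination htr2 - 4 * htr
  have hr : (Complex.normSq (S 0 0 - 2) + Complex.normSq (S 0 1)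
      + Complex.normSq (S 1 0) + Complex.normSq (S 1 1 - 2) : ℝ) = 0 := by
    exact_mod_cast hc
  have n1 := Complex.normSq_nonneg (S 0 0 - 2)
  have n2 := Complex.normSq_nonneg (S 0 1)
  have n3 := Complex.normSq_nonneg (S 1 0)
  have n4 := Complex.normSq_nonneg (S 1 1 - 2)
  have z1 : S 0 0 = 2 := by
    have h := Complex.normSq_eq_zero.mp (by linarith : Complex.normSq (S 0 0 - 2) = 0)
    linear_combination h
  have z2 : S 0 1 = 0 := Complex.normSq_eq_zero.mp (by linarith)
  have z3 : S 1 0 = 0 := Complex.normSq_eq_zero.mp (by linarith)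
  have z4 : S 1 1 = 2 := by
    have h := Complex.normSq_eq_zero.mp (by linarith : Complex.normSq (S 1 1 - 2) = 0)
    linear_combination h
  ext a b
  have hab : (∑ k : Fin 4, proj (ψ k)) a b = S a b := by
    simp [proj, hSdef, Matrix.sum_apply, vecMulVec_apply, RCLike.star_def]
  rw [hab]
  fin_cases a <;> fin_cases b <;>
    simp [Matrix.one_apply, Fin.mk_zero, Fin.mk_one, z1, z2, z3, z4]
end
end

section
/- Let n ≥ 1 and d = 2^n. For each i ∈ {1,…,n} let {ψ_{i,k}}_{k=1}^4 and {φ_{i,k}}_{k=1}^4 be single-qubit SIC-POVMs (possibly different). Form the tensor-product states ψ_k = ψ_{1,k_1} ⊗ ⋯ ⊗ ψ_{n,k_n} and φ_k = φ_{1,k_1} ⊗ ⋯ ⊗ φ_{n,k_n} for k ∈ {1,…,4}^n, and the d²×d² matrices Γ_ψ = Σ_k (ψ_k ψ_k†)^T ⊗ (ψ_k ψ_k†) and Γ_φ = Σ_k (φ_k φ_k†)^T ⊗ (φ_k φ_k†). Then Γ_ψ = Γ_φ. In particular, the 0-fidelity F₀(E) = (1/d)·Tr(χ Γ) of a process with Choi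 matrix χ does not depend on the choice of single-qubit SIC-POVMs. -/
open Matrix Polynomial
open scoped Kronecker ComplexOrder Classical

noncomputable section

namespace SICaux

/-- The quartic sum `∑_k ψ_k(a) ψ_k(b) conj(ψ_k(c)) conj(ψ_k(d))` for a single qubit. -/
def qf (ψ : Fin 4 → Fin 2 → ℂ) (a b c d : Fin 2) : ℂ :=
  ∑ k, ψ k a * ψ k b * (starRingEnd ℂ) (ψ k c) * (starRingEnd ℂ) (ψ k d)

/-- The value forced by the 2-design property. -/
def cf (a b c d : Fin 2) : ℂ :=
  (2/3) * ((if a = c then 1 else 0) * (if b = d then 1 else 0)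
         + (if a = d then 1 else 0) * (if b = c then 1 else 0))

lemma cinner_conj {m : Type*} [Fintype m] (v w : m → ℂ) :
    (starRingEnd ℂ) (cinner v w) = cinner w v := by
  simp [cinner, map_sum, mul_comm]

lemma ovl {ψ : Fin 4 → Fin 2 → ℂ} (h : IsSICPOVM ψ) (j k : Fin 4) :
    cinner (ψ j) (ψ k) * cinner (ψ k) (ψ j) = if j = k then 1 else 1/3 := by
  by_cases hjk : j = k
  · subst hjk; simp [h.1 j]
  · rw [if_neg hjk, ← cinner_conj, mul_comm, Complex.mul_conj]
    rw [← Complex.sq_norm, h.2 k j (fun e => hjk e.symm)]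
    norm_num

lemma qf_herm (ψ : Fin 4 → Fin 2 → ℂ) (a b c d : Fin 2) :
    (starRingEnd ℂ) (qf ψ a b c d) = qf ψ c d a b := by
  simp only [qf, map_sum, _root_.map_mul, Complex.conj_conj]
  exact Finset.sum_congr rfl fun k _ => by ring

lemma cf_herm (a b c d : Fin 2) :
    (starRingEnd ℂ) (cf a b c d) = cf c d a b := by
  fin_cases a <;> fin_cases b <;> fin_cases c <;> fin_cases d <;> norm_num [cf, map_ofNat]

lemma qf_eq {ψ : Fin 4 → Fin 2 → ℂ} (h : IsSICPOVM ψ) (a b c d : Fin 2) :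
    qf ψ a b c d = cf a b c d := by
  set D : Fin 2 → Fin 2 → Fin 2 → Fin 2 → ℂ :=
    fun a b c d => qf ψ a b c d - cf a b c d with hD'
  have herm : ∀ a b c d : Fin 2, D c d a b = (starRingEnd ℂ) (D a b c d) := by
    intro a b c d
    simp only [hD', map_sub, qf_herm, cf_herm]
  have tr0 : (∑ p : (Fin 2 × Fin 2) × (Fin 2 × Fin 2),
      D p.1.1 p.1.2 p.2.1 p.2.2 * D p.2.1 p.2.2 p.1.1 p.1.2) = 0 := by
    have key : (∑ p : (Fin 2 × Fin 2) × (Fin 2 × Fin 2),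
        D p.1.1 p.1.2 p.2.1 p.2.2 * D p.2.1 p.2.2 p.1.1 p.1.2)
        = (∑ j : Fin 4, ∑ k : Fin 4,
            (cinner (ψ j) (ψ k) * cinner (ψ k) (ψ j))^2)
          - (8/3) * ∑ k : Fin 4, (cinner (ψ k) (ψ k))^2 + 16/3 := by
      simp only [hD', qf, cf, cinner, Fintype.sum_prod_type, Fin.sum_univ_two,
        Fin.sum_univ_four]
      norm_num
      ring
    rw [key]
    simp only [ovl h, h.1]
    simp only [Fin.sum_univ_four, Fin.reduceEq, if_false, if_true]
    norm_num
  have pt : ∀ p : (Fin 2 × Fin 2) × (Fin 2 × Fin 2),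
      D p.1.1 p.1.2 p.2.1 p.2.2 * D p.2.1 p.2.2 p.1.1 p.1.2
        = (Complex.normSq (D p.1.1 p.1.2 p.2.1 p.2.2) : ℂ) := by
    intro p
    rw [herm p.1.1 p.1.2 p.2.1 p.2.2, Complex.mul_conj]
  rw [Finset.sum_congr rfl (fun p _ => pt p)] at tr0
  have tr0' : (∑ p : (Fin 2 × Fin 2) × (Fin 2 × Fin 2),
      Complex.normSq (D p.1.1 p.1.2 p.2.1 p.2.2)) = 0 := by
    exact_mod_cast tr0
  have hzero := (Finset.sum_eq_zero_iff_of_nonneg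
    (fun q _ => Complex.normSq_nonneg _)).mp tr0' ((a, b), (c, d)) (Finset.mem_univ _)
  have hD0 : D a b c d = 0 := Complex.normSq_eq_zero.mp hzero
  have h2 : qf ψ a b c d - cf a b c d = 0 := hD0
  exact sub_eq_zero.mp h2

lemma Gam_apply {n : ℕ} (ψ : Fin n → Fin 4 → Fin 2 → ℂ)
    (p q : (Fin n → Fin 2) × (Fin n → Fin 2)) :
    Gam ψ p q = ∏ i, qf (ψ i) (q.1 i) (p.2 i) (p.1 i) (q.2 i) := by
  have hterm : ∀ k : Fin n → Fin 4,
      ((proj (prodState ψ k))ᵀ ⊗ₖ proj (prodState ψ k)) p q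
      = ∏ i, (ψ i (k i) (q.1 i) * ψ i (k i) (p.2 i) *
          (starRingEnd ℂ) (ψ i (k i) (p.1 i)) * (starRingEnd ℂ) (ψ i (k i) (q.2 i))) := by
    intro k
    simp only [Matrix.kroneckerMap_apply, Matrix.transpose_apply, proj,
      Matrix.vecMulVec_apply, Pi.star_apply, prodState, Complex.star_def, map_prod,
      ← Finset.prod_mul_distrib]
    exact Finset.prod_congr rfl fun i _ => by ring
  rw [Gam, Matrix.sum_apply]
  simp only [hterm]
  rw [← Fintype.piFinset_univ]
  simp only [qf]
  rw [Finset.prod_univ_sum]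

end SICaux

/-- `Γ` does not depend on the choice of single-qubit SIC-POVMs; in particular the
    0-fidelity `(1/d)·Tr(χΓ)` is independent of this choice. -/
theorem Gam_independent_of_sic (n : ℕ) (hn : 1 ≤ n)
    (ψ φ' : Fin n → Fin 4 → Fin 2 → ℂ)
    (hψ : ∀ i, IsSICPOVM (ψ i)) (hφ' : ∀ i, IsSICPOVM (φ' i)) :
    Gam ψ = Gam φ' ∧
      ∀ χ : Matrix ((Fin n → Fin 2) × (Fin n → Fin 2)) ((Fin n → Fin 2) × (Fin n → Fin 2)) ℂ,
        ((2 : ℂ) ^ n)⁻¹ * (χ * Gam ψ).trace = ((2 : ℂ) ^ n)⁻¹ * (χ * Gam φ').trace := by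
  have hG : Gam ψ = Gam φ' := by
    ext p q
    rw [SICaux.Gam_apply, SICaux.Gam_apply]
    exact Finset.prod_congr rfl fun i _ => by
      rw [SICaux.qf_eq (hψ i), SICaux.qf_eq (hφ' i)]
  exact ⟨hG, fun χ => by rw [hG]⟩
end
end

section
/- Let d = 2 (the single-qubit case, n = 1), let {ψ_k}_{k=1}^4 be a single-qubit SIC-POVM, let Γ = Σ_{k=1}^4 (ψ_k ψ_k†)^T ⊗ (ψ_k ψ_k†) (a 4×4 matrix), and let φ = (1/√2)(e_1 ⊗ e_1 + e_2 ⊗ e_2) ∈ ℂ⁴. Then for every positive semidefinite 4×4 complex matrix χ satisfying the trace-preservation condition Tr₂(χ) = I/2 (partial trace over the second tensor factor equals half the 2×2 identity), setting F = ⟨φ, χ φ⟩ and F₀ = (1/2)·Tr(χ Γ), we have F = 1 − (3/2)(1 − F₀), i.e., F = (3F₀ − 1)/2. Thus for a single qubit the process fidelity is uniquely determined by the 0-fidelity and equals the lower bound of the main theorem. -/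
open Matrix Polynomial
open scoped Kronecker ComplexOrder Classical

noncomputable section

lemma trace_mul_proj {m : Type*} [Fintype m] (M : Matrix m m ℂ) (v : m → ℂ) :
    (M * proj v).trace = cinner v (M.mulVec v) := by
  simp only [Matrix.trace, Matrix.diag, Matrix.mul_apply, proj, vecMulVec_apply,
    cinner, Matrix.mulVec, dotProduct, Finset.mul_sum, Pi.star_apply, starRingEnd_apply]
  exact Finset.sum_congr rfl fun p _ => Finset.sum_congr rfl fun q _ => by ring

lemma trace_proj {m : Type*} [Fintype m] (v : m → ℂ) :
    (proj v).trace = cinner v v := by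
  simp only [Matrix.trace, Matrix.diag, proj, vecMulVec_apply, cinner, Pi.star_apply,
    starRingEnd_apply]
  exact Finset.sum_congr rfl fun p _ => by ring

lemma trace_proj_mul_proj {m : Type*} [Fintype m] (v w : m → ℂ) :
    (proj v * proj w).trace = cinner v w * cinner w v := by
  simp only [Matrix.trace, Matrix.diag, Matrix.mul_apply, proj, vecMulVec_apply,
    cinner, Pi.star_apply, Finset.sum_mul_sum, starRingEnd_apply]
  rw [Finset.sum_comm]
  exact Finset.sum_congr rfl fun p _ => Finset.sum_congr rfl fun q _ => by ring

lemma transpose_proj {m : Type*} (v : m → ℂ) : (proj v)ᵀ = proj (star v) := by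
  ext i j
  simp [proj, vecMulVec_apply, mul_comm]

lemma cinner_star_star {m : Type*} [Fintype m] (v w : m → ℂ) :
    cinner (star v) (star w) = cinner w v := by
  simp only [cinner, Pi.star_apply, starRingEnd_apply, star_star]
  exact Finset.sum_congr rfl fun p _ => by ring

lemma conjTranspose_proj {m : Type*} (v : m → ℂ) : (proj v)ᴴ = proj v := by
  ext i j
  simp only [proj, conjTranspose_apply, vecMulVec_apply, Pi.star_apply, star_mul', star_star]
  ring

def phi : Fin 2 × Fin 2 → ℂ :=
  fun p => if p.1 = p.2 then (((Real.sqrt 2)⁻¹ : ℝ) : ℂ) else 0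

lemma hc : (((Real.sqrt 2)⁻¹ : ℝ) : ℂ) * (((Real.sqrt 2)⁻¹ : ℝ) : ℂ) = 2⁻¹ := by
  rw [← Complex.ofReal_mul, ← mul_inv, Real.mul_self_sqrt (by norm_num)]
  norm_num

lemma hc2 : ((Real.sqrt 2 : ℝ) : ℂ)⁻¹ * ((Real.sqrt 2 : ℝ) : ℂ)⁻¹ = 2⁻¹ := by
  rw [← Complex.ofReal_inv]
  exact hc

lemma hc2sq : ((Real.sqrt 2 : ℝ) : ℂ)⁻¹ ^ 2 = 2⁻¹ := by
  rw [sq]; exact hc2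

lemma cinner_phi_phi : cinner phi phi = 1 := by
  simp only [cinner, phi]
  rw [Fintype.sum_prod_type]
  simp only [Fin.sum_univ_two]
  norm_num
  rw [hc2]
  norm_num

lemma trace_kron_phi (A B : Matrix (Fin 2) (Fin 2) ℂ) :
    ((Aᵀ ⊗ₖ B) * proj phi).trace = 2⁻¹ * (A * B).trace := by
  rw [trace_mul_proj]
  simp only [cinner, Matrix.mulVec, dotProduct, phi, kroneckerMap_apply, transpose_apply,
    Matrix.trace, Matrix.diag, Matrix.mul_apply]
  rw [Fintype.sum_prod_type]
  simp only [Fintype.sum_prod_type]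
  simp only [Fin.sum_univ_two]
  norm_num
  ring_nf
  rw [hc2sq]
  ring

lemma eq_zero_of_trace_conjTranspose_mul {m : Type*} [Fintype m] [DecidableEq m]
    (T : Matrix m m ℂ) (h : (Tᴴ * T).trace = 0) : T = 0 := by
  have h2 : ((∑ j : m, ∑ i : m, (Complex.normSq (T i j) : ℝ) : ℝ) : ℂ) = 0 := by
    rw [← h]
    push_cast
    simp only [Matrix.trace, Matrix.diag, Matrix.mul_apply, conjTranspose_apply]
    refine (Finset.sum_congr rfl fun j _ => Finset.sum_congr rfl fun i _ => ?_).symm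
    rw [mul_comm, Complex.star_def, Complex.mul_conj]
  rw [Complex.ofReal_eq_zero] at h2
  have h3 : ∀ j ∈ Finset.univ, ∀ i ∈ Finset.univ, Complex.normSq (T i j) = 0 := by
    intro j _ i _
    have := (Finset.sum_eq_zero_iff_of_nonneg (fun j _ =>
      Finset.sum_nonneg fun i _ => Complex.normSq_nonneg _)).mp h2 j (Finset.mem_univ j)
    exact (Finset.sum_eq_zero_iff_of_nonneg (fun i _ => Complex.normSq_nonneg _)).mp this i
      (Finset.mem_univ i)
  ext i j
  exact Complex.normSq_eq_zero.mp (h3 j (Finset.mem_univ j) i (Finset.mem_univ i))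

lemma kron_conjTranspose {m : Type*} (A B : Matrix m m ℂ) :
    (A ⊗ₖ B)ᴴ = Aᴴ ⊗ₖ Bᴴ := by
  ext ⟨x, a⟩ ⟨y, b⟩
  simp only [conjTranspose_apply, kroneckerMap_apply, star_mul']
  try ring

lemma hov {ψ : Fin 4 → Fin 2 → ℂ} (hψ : IsSICPOVM ψ) (k j : Fin 4) :
    cinner (ψ k) (ψ j) * cinner (ψ j) (ψ k) = if k = j then 1 else 1/3 := by
  split
  · subst ‹k = j›; rw [hψ.1 k]; norm_num
  · rw [← cinner_conj (ψ k) (ψ j), Complex.mul_conj, ← Complex.sq_norm,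
      hψ.2 k j ‹k ≠ j›]
    norm_num

lemma transpose_herm {m : Type*} {A : Matrix m m ℂ} (h : Aᴴ = A) : (Aᵀ)ᴴ = Aᵀ := by
  ext i j
  have := congrFun (congrFun h j) i
  simpa [conjTranspose_apply, transpose_apply] using this

lemma gamma_eq (ψ : Fin 4 → Fin 2 → ℂ) (hψ : IsSICPOVM ψ) :
    (∑ k : Fin 4, (proj (ψ k))ᵀ ⊗ₖ proj (ψ k))
      = (2/3 : ℂ) • (1 : Matrix (Fin 2 × Fin 2) (Fin 2 × Fin 2) ℂ) + (4/3 : ℂ) • proj phi := by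
  set Γ : Matrix (Fin 2 × Fin 2) (Fin 2 × Fin 2) ℂ :=
    ∑ k : Fin 4, (proj (ψ k))ᵀ ⊗ₖ proj (ψ k) with hΓ
  set A : Matrix (Fin 2 × Fin 2) (Fin 2 × Fin 2) ℂ :=
    (2/3 : ℂ) • 1 + (4/3 : ℂ) • proj phi with hA
  rw [← sub_eq_zero]
  have tkron : ∀ k j : Fin 4,
      (((proj (ψ k))ᵀ ⊗ₖ proj (ψ k)) * ((proj (ψ j))ᵀ ⊗ₖ proj (ψ j))).trace
        = if k = j then 1 else 1/9 := by
    intro k j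
    rw [← mul_kronecker_mul, trace_kronecker, transpose_proj, transpose_proj,
      trace_proj_mul_proj, trace_proj_mul_proj, cinner_star_star, cinner_star_star]
    rw [show cinner (ψ j) (ψ k) * cinner (ψ k) (ψ j)
        = cinner (ψ k) (ψ j) * cinner (ψ j) (ψ k) by ring, hov hψ k j]
    split <;> norm_num
  have tΓΓ : (Γ * Γ).trace = 16/3 := by
    rw [hΓ, Finset.sum_mul_sum, Matrix.trace_sum]
    simp only [Matrix.trace_sum, tkron]
    simp [Fin.sum_univ_four]
    norm_num
  have tΓ : Γ.trace = 4 := by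
    rw [hΓ, Matrix.trace_sum]
    have : ∀ k : Fin 4, (((proj (ψ k))ᵀ ⊗ₖ proj (ψ k))).trace = 1 := by
      intro k
      rw [trace_kronecker, Matrix.trace_transpose, trace_proj, hψ.1 k]
      norm_num
    simp [this]
  have tΓΦ : (Γ * proj phi).trace = 2 := by
    rw [hΓ, Finset.sum_mul, Matrix.trace_sum]
    have : ∀ k : Fin 4, (((proj (ψ k))ᵀ ⊗ₖ proj (ψ k)) * proj phi).trace = 2⁻¹ := by
      intro k
      rw [trace_kron_phi, trace_proj_mul_proj, hψ.1 k]
      norm_num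
    simp [this]
    norm_num
  have tΦΦ : (proj phi * proj phi).trace = 1 := by
    rw [trace_proj_mul_proj, cinner_phi_phi]; norm_num
  have tΦ : (proj phi).trace = 1 := by rw [trace_proj, cinner_phi_phi]
  have hΓH : Γᴴ = Γ := by
    rw [hΓ, conjTranspose_sum]
    refine Finset.sum_congr rfl fun k _ => ?_
    rw [kron_conjTranspose, conjTranspose_proj, transpose_herm (conjTranspose_proj _)]
  have hAH : Aᴴ = A := by
    rw [hA, conjTranspose_add, conjTranspose_smul, conjTranspose_smul, conjTranspose_one,
      conjTranspose_proj]
    norm_num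
  apply eq_zero_of_trace_conjTranspose_mul
  rw [conjTranspose_sub, hΓH, hAH, hA]
  simp only [sub_mul, mul_sub, Matrix.add_mul, Matrix.mul_add, Matrix.smul_mul,
    Matrix.mul_smul, smul_smul, Matrix.one_mul, Matrix.mul_one,
    trace_sub, trace_add, trace_smul, smul_eq_mul]
  rw [trace_mul_comm (proj phi) Γ]
  rw [tΓΓ, tΓ, tΓΦ, tΦΦ, tΦ, Matrix.trace_one]
  norm_num

/-- Single-qubit case: for any Choi matrix `χ` of a CPTP map on one qubit,
    the process fidelity is uniquely determined by the 0-fidelity: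
    `F = 1 - (3/2)(1 - F₀)`. -/
theorem single_qubit_fidelity_eq (ψ : Fin 4 → Fin 2 → ℂ) (hψ : IsSICPOVM ψ)
    (χ : Matrix (Fin 2 × Fin 2) (Fin 2 × Fin 2) ℂ)
    (hχ : χ.PosSemidef)
    (hTP : (Matrix.of fun x y : Fin 2 => ∑ a : Fin 2, χ (x, a) (y, a)) =
      ((2 : ℂ))⁻¹ • (1 : Matrix (Fin 2) (Fin 2) ℂ)) :
    cinner (fun p : Fin 2 × Fin 2 => if p.1 = p.2 then (((Real.sqrt 2)⁻¹ : ℝ) : ℂ) else 0)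
        (χ.mulVec (fun p : Fin 2 × Fin 2 =>
          if p.1 = p.2 then (((Real.sqrt 2)⁻¹ : ℝ) : ℂ) else 0))
      = 1 - 3 / 2 * (1 - (2 : ℂ)⁻¹ *
          (χ * ∑ k : Fin 4, (proj (ψ k))ᵀ ⊗ₖ proj (ψ k)).trace) := by
  have hφ : (fun p : Fin 2 × Fin 2 => if p.1 = p.2 then (((Real.sqrt 2)⁻¹ : ℝ) : ℂ) else 0)
      = phi := rfl
  rw [hφ, ← trace_mul_proj, gamma_eq ψ hψ]
  have htr : χ.trace = 1 := by
    have h1 : χ.trace = (Matrix.of fun x y : Fin 2 => ∑ a : Fin 2, χ (x, a) (y, a)).trace := by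
      simp [Matrix.trace, Matrix.diag, Fintype.sum_prod_type, Matrix.of_apply]
    rw [h1, hTP, Matrix.trace_smul, Matrix.trace_one]
    norm_num
  rw [Matrix.mul_add, Matrix.mul_smul, Matrix.mul_smul, Matrix.mul_one,
    trace_add, trace_smul, trace_smul, htr, smul_eq_mul, smul_eq_mul]
  ring

end
end
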